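/- arXiv:2310.16382 — 6 statements merged into one kernel-verified Lean document; each statement's English description precedes it below -/
import Mathlib

section
/- If H is a connected spanning-or-induced connected subgraph of a connected graph G, then for every natural number x ≥ 1, P(G,x) ≤ P(H,x)·(x-1)^{|V(G)|-|V(H)|}. -/
/-- The number of proper colorings of `G` with `x` colors. -/
noncomputable def properColorings {V : Type*} (G : SimpleGraph V) (x : ℕ) : ℕ :=
  Nat.card {c : V → Fin x // ∀ ⦃a b⦄, G.Adj a b → c a ≠ c b}

private def enc (b a : ℕ) : ℕ := if a < b then a else a - 1

private lemma enc_lt {x a b : ℕ} (ha : a < x) (hb : b < x) (hab : a ≠ b) : enc b a < x - 1 := by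
  unfold enc; split_ifs <;> omega

private lemma enc_inj {a a' b : ℕ} (h1 : a ≠ b) (h2 : a' ≠ b) (h : enc b a = enc b a') :
    a = a' := by
  unfold enc at h; split_ifs at h <;> omega

/-- If `H` is a connected subgraph of a connected graph `G`, then for every `x ≥ 1`,
`P(G,x) ≤ P(H,x)·(x-1)^{|V(G)|-|V(H)|}`. -/
theorem stmt_5 {V : Type*} [Fintype V] (G : SimpleGraph V) (H : G.Subgraph) (x : ℕ)
    (hx : 1 ≤ x) (hG : G.Connected) (hH : H.coe.Connected) :
    properColorings G x ≤
      properColorings H.coe x * (x - 1) ^ (Nat.card V - Nat.card H.verts) := by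
  classical
  obtain ⟨⟨h0, hh0⟩⟩ := hH.nonempty
  have hex : ∀ v : V, v ∉ H.verts → ∃ u, G.Adj v u ∧ G.dist u h0 < G.dist v h0 := by
    intro v hv
    have hne : v ≠ h0 := fun h => hv (h ▸ hh0)
    have hpos : 0 < G.dist v h0 := hG.pos_dist_of_ne hne
    obtain ⟨p, hp⟩ := hG.exists_walk_length_eq_dist v h0
    cases p with
    | nil => simp at hp hpos
    | cons h q =>
      refine ⟨_, h, ?_⟩
      have := SimpleGraph.dist_le q
      simp [SimpleGraph.Walk.length_cons] at hp
      omega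
  set f : {v : V // v ∉ H.verts} → V := fun v => (hex v.1 v.2).choose with hf
  have hfadj : ∀ v : {v : V // v ∉ H.verts}, G.Adj v.1 (f v) :=
    fun v => (hex v.1 v.2).choose_spec.1
  have hfdist : ∀ v : {v : V // v ∉ H.verts}, G.dist (f v) h0 < G.dist v.1 h0 :=
    fun v => (hex v.1 v.2).choose_spec.2
  set T := {c : ↥H.verts → Fin x // ∀ ⦃a b⦄, H.coe.Adj a b → c a ≠ c b} ×
    ({v : V // v ∉ H.verts} → Fin (x - 1)) with hT
  set Φ : {c : V → Fin x // ∀ ⦃a b⦄, G.Adj a b → c a ≠ c b} → T := fun c =>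
    ⟨⟨fun v => c.1 v.1, fun a b hab => c.2 (H.adj_sub hab)⟩,
     fun v => ⟨enc (c.1 (f v)).val (c.1 v.1).val,
       enc_lt (c.1 v.1).isLt (c.1 (f v)).isLt
         (fun h => c.2 (hfadj v) (Fin.val_injective h))⟩⟩ with hΦ
  have hinj : Function.Injective Φ := by
    intro c c' h
    have h1 : ∀ w : ↥H.verts, c.1 w.1 = c'.1 w.1 := by
      intro w
      have := congrArg Prod.fst h
      exact congrFun (congrArg Subtype.val this) w
    have h2 : ∀ v : {v : V // v ∉ H.verts},
        enc (c.1 (f v)).val (c.1 v.1).val = enc (c'.1 (f v)).val (c'.1 v.1).val := by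
      intro v
      have := congrFun (congrArg Prod.snd h) v
      exact congrArg Fin.val this
    have key : ∀ n, ∀ v : V, G.dist v h0 = n → c.1 v = c'.1 v := by
      intro n
      induction n using Nat.strong_induction_on with
      | _ n ih =>
        intro v hdv
        by_cases hv : v ∈ H.verts
        · exact h1 ⟨v, hv⟩
        · have hu : c.1 (f ⟨v, hv⟩) = c'.1 (f ⟨v, hv⟩) := by
            apply ih (G.dist (f ⟨v, hv⟩) h0) (by rw [← hdv]; exact hfdist ⟨v, hv⟩) _ rfl
          have he := h2 ⟨v, hv⟩
          rw [← hu] at he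
          refine Fin.val_injective (enc_inj ?_ ?_ he)
          · exact fun hh => c.2 (hfadj ⟨v, hv⟩) (Fin.val_injective hh)
          · exact fun hh => c'.2 (hfadj ⟨v, hv⟩)
              (Fin.val_injective (hh.trans (congrArg Fin.val hu)))
    exact Subtype.ext (funext fun v => key (G.dist v h0) v rfl)
  calc properColorings G x ≤ Nat.card T := Nat.card_le_card_of_injective Φ hinj
    _ = properColorings H.coe x * (x - 1) ^ (Nat.card V - Nat.card ↥H.verts) := by
        have e1 : Nat.card (Fin (x - 1)) = x - 1 := by
          simp [Nat.card_eq_fintype_card]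
        have e2 : Nat.card {v : V // v ∉ H.verts} = Nat.card V - Nat.card ↥H.verts := by
          simp only [Nat.card_eq_fintype_card]
          exact Fintype.card_subtype_compl _
        rw [hT, Nat.card_prod, Nat.card_fun, e1, e2]
        rfl
end

section
/- If G and H are graphs whose intersection is a complete graph K_r, then for every natural number x, P(G ∪ H, x)·P(K_r, x) = P(G, x)·P(H, x). -/
private lemma exists_perm_comp {α β : Type*} [Finite β] {f g : α → β}
    (hf : Function.Injective f) (hg : Function.Injective g) :
    ∃ σ : Equiv.Perm β, ∀ a, σ (f a) = g a := by
  classical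
  let e : {y // y ∈ Set.range f} ≃ {y // y ∈ Set.range g} :=
    (Equiv.ofInjective f hf).symm.trans (Equiv.ofInjective g hg)
  refine ⟨e.extendSubtype, fun a => ?_⟩
  rw [Equiv.extendSubtype_apply_of_mem e (f a) ⟨a, rfl⟩]
  simp [e, Equiv.ofInjective_symm_apply]

private lemma nat_card_sigma {γ : Type*} [Fintype γ] {β : γ → Type*} [∀ f, Finite (β f)] :
    Nat.card (Σ f, β f) = ∑ f, Nat.card (β f) := by
  letI : ∀ f, Fintype (β f) := fun f => Fintype.ofFinite _
  simp [Nat.card_eq_fintype_card]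

private lemma main_count {α₁ α₂ γ : Type*} [Finite α₁] [Finite α₂] [Finite γ]
    (u : α₁ → γ) (v : α₂ → γ)
    (hu : ∀ f g : γ, Nat.card {a // u a = f} = Nat.card {a // u a = g})
    (hv : ∀ f g : γ, Nat.card {a // v a = f} = Nat.card {a // v a = g}) :
    Nat.card {p : α₁ × α₂ // u p.1 = v p.2} * Nat.card γ = Nat.card α₁ * Nat.card α₂ := by
  classical
  cases nonempty_fintype γ
  have e1 : {p : α₁ × α₂ // u p.1 = v p.2} ≃ Σ f : γ, {a // u a = f} × {b // v b = f} :=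
    { toFun := fun p => ⟨u p.1.1, ⟨p.1.1, rfl⟩, ⟨p.1.2, p.2.symm⟩⟩
      invFun := fun q => ⟨(q.2.1.1, q.2.2.1), by rw [q.2.1.2, q.2.2.2]⟩
      left_inv := fun p => rfl
      right_inv := fun q => by
        obtain ⟨f, ⟨a, ha⟩, ⟨b, hb⟩⟩ := q
        subst ha
        rfl }
  rw [Nat.card_congr e1, Nat.card_congr (Equiv.sigmaFiberEquiv u).symm,
    Nat.card_congr (Equiv.sigmaFiberEquiv v).symm, nat_card_sigma, nat_card_sigma, nat_card_sigma]
  rcases isEmpty_or_nonempty γ with h | ⟨⟨f₀⟩⟩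
  · simp
  · have h1 : ∀ f, Nat.card ({a // u a = f} × {b // v b = f})
        = Nat.card {a // u a = f₀} * Nat.card {b // v b = f₀} := by
      intro f
      rw [Nat.card_prod, hu f f₀, hv f f₀]
    rw [Finset.sum_congr rfl fun f _ => h1 f,
      Finset.sum_congr rfl fun f _ => hu f f₀,
      Finset.sum_congr rfl fun f _ => hv f f₀]
    simp [Finset.sum_const, Nat.card_eq_fintype_card, Finset.card_univ]
    ring

/-- Restriction of a proper coloring to a complete vertex subset is injective. -/
private def res {V : Type*} {K : SimpleGraph V} (C : K.Subgraph) (T : Set V)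
    (hsub : T ⊆ C.verts) (hadj : ∀ a b : T, a ≠ b → C.Adj a b) {x : ℕ}
    (c : {c : ↥C.verts → Fin x // ∀ ⦃a b⦄, C.coe.Adj a b → c a ≠ c b}) :
    {h : ↥T → Fin x // Function.Injective h} :=
  ⟨fun t => c.1 ⟨t.1, hsub t.2⟩, by
    intro a b hab
    by_contra hne
    exact c.2 (show C.coe.Adj ⟨a.1, hsub a.2⟩ ⟨b.1, hsub b.2⟩ from hadj a b hne) hab⟩

private lemma res_fiber_const {V : Type*} [Finite V] {K : SimpleGraph V} (C : K.Subgraph)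
    (T : Set V) (hsub : T ⊆ C.verts) (hadj : ∀ a b : T, a ≠ b → C.Adj a b) {x : ℕ}
    (f g : {h : ↥T → Fin x // Function.Injective h}) :
    Nat.card {c // res C T hsub hadj (x := x) c = f} =
      Nat.card {c // res C T hsub hadj (x := x) c = g} := by
  obtain ⟨σ, hσ⟩ := exists_perm_comp f.2 g.2
  refine Nat.card_congr
    { toFun := fun c => ⟨⟨σ ∘ c.1.1, fun a b h he => c.1.2 h (σ.injective he)⟩, ?_⟩
      invFun := fun c => ⟨⟨σ.symm ∘ c.1.1, fun a b h he => c.1.2 h (σ.symm.injective he)⟩, ?_⟩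
      left_inv := fun c => Subtype.ext (Subtype.ext (funext fun v => σ.symm_apply_apply _))
      right_inv := fun c => Subtype.ext (Subtype.ext (funext fun v => σ.apply_symm_apply _)) }
  · apply Subtype.ext
    funext t
    show σ (c.1.1 ⟨t.1, hsub t.2⟩) = g.1 t
    have h1 : c.1.1 ⟨t.1, hsub t.2⟩ = f.1 t := congrFun (congrArg Subtype.val c.2) t
    rw [h1, hσ]
  · apply Subtype.ext
    funext t
    show σ.symm (c.1.1 ⟨t.1, hsub t.2⟩) = f.1 t
    have h1 : c.1.1 ⟨t.1, hsub t.2⟩ = g.1 t := congrFun (congrArg Subtype.val c.2) t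
    rw [h1, ← hσ, σ.symm_apply_apply]

private lemma card_inj {V : Type*} [Fintype V] (T : Set V) (r x : ℕ) (hcard : Nat.card T = r) :
    Nat.card {h : ↥T → Fin x // Function.Injective h} = x.descFactorial r := by
  classical
  rw [Nat.card_congr (Equiv.subtypeInjectiveEquivEmbedding ↥T (Fin x))]
  rw [Nat.card_eq_fintype_card, Fintype.card_embedding_eq, Fintype.card_fin]
  congr 1
  rw [← Nat.card_eq_fintype_card]
  exact hcard

/-- If a graph is the union of two subgraphs `A` and `B` whose intersection is a complete
graph `K_r`, then `P(A ∪ B, x)·P(K_r, x) = P(A, x)·P(B, x)`, where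
`P(K_r, x) = x(x-1)⋯(x-r+1)`. -/
theorem stmt_6 {V : Type*} [Fintype V] (K : SimpleGraph V) (A B : K.Subgraph) (r x : ℕ)
    (hunion : A ⊔ B = ⊤)
    (hcard : Nat.card (A ⊓ B).verts = r)
    (hcomplete : ∀ a b : (A ⊓ B).verts, a ≠ b → (A ⊓ B).coe.Adj a b) :
    properColorings K x * x.descFactorial r =
      properColorings A.coe x * properColorings B.coe x := by
  classical
  set T : Set V := (A ⊓ B).verts with hT
  have hTi : T = A.verts ∩ B.verts := SimpleGraph.Subgraph.verts_inf A B
  have hsubA : T ⊆ A.verts := hTi ▸ Set.inter_subset_left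
  have hsubB : T ⊆ B.verts := hTi ▸ Set.inter_subset_right
  have hadjA : ∀ a b : ↥T, a ≠ b → A.Adj a.1 b.1 := fun a b h =>
    (inf_le_left : A ⊓ B ≤ A).2 (hcomplete a b h)
  have hadjB : ∀ a b : ↥T, a ≠ b → B.Adj a.1 b.1 := fun a b h =>
    (inf_le_right : A ⊓ B ≤ B).2 (hcomplete a b h)
  set uA := res A T hsubA hadjA (x := x) with huA
  set uB := res B T hsubB hadjB (x := x) with huB
  have hall : ∀ v : V, v ∈ A.verts ∪ B.verts := by
    intro v
    rw [← SimpleGraph.Subgraph.verts_sup, hunion, SimpleGraph.Subgraph.verts_top]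
    trivial
  have hKadj : ∀ {a b : V}, K.Adj a b → A.Adj a b ∨ B.Adj a b := by
    intro a b h
    rw [← SimpleGraph.Subgraph.sup_adj, hunion, SimpleGraph.Subgraph.top_adj]
    exact h
  -- the decomposition equivalence
  have e1 : {c : V → Fin x // ∀ ⦃a b⦄, K.Adj a b → c a ≠ c b} ≃
      {p : {c : ↥A.verts → Fin x // ∀ ⦃a b⦄, A.coe.Adj a b → c a ≠ c b} ×
           {c : ↥B.verts → Fin x // ∀ ⦃a b⦄, B.coe.Adj a b → c a ≠ c b} //
        uA p.1 = uB p.2} := by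
    refine
      { toFun := fun c => ⟨(⟨fun v => c.1 v.1, fun a b h => c.2 (A.adj_sub h)⟩,
          ⟨fun v => c.1 v.1, fun a b h => c.2 (B.adj_sub h)⟩), rfl⟩
        invFun := fun p => ⟨fun v =>
          if hv : v ∈ A.verts then p.1.1.1 ⟨v, hv⟩
          else p.1.2.1 ⟨v, (hall v).resolve_left hv⟩, ?_⟩
        left_inv := ?_
        right_inv := ?_ }
    case refine_1 =>
      obtain ⟨⟨cA, cB⟩, hab⟩ := p
      have hB : ∀ (v : V) (hv : v ∈ B.verts),
          (if hv' : v ∈ A.verts then cA.1 ⟨v, hv'⟩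
            else cB.1 ⟨v, (hall v).resolve_left hv'⟩) = cB.1 ⟨v, hv⟩ := by
        intro v hv
        by_cases hv' : v ∈ A.verts
        · rw [dif_pos hv']
          have hvT : v ∈ T := hTi ▸ ⟨hv', hv⟩
          exact congrFun (congrArg Subtype.val hab) ⟨v, hvT⟩
        · rw [dif_neg hv']
      intro a b h hc
      dsimp only at hc
      rcases hKadj h with h' | h'
      · rw [dif_pos h'.fst_mem, dif_pos h'.snd_mem] at hc
        exact cA.2 (show A.coe.Adj ⟨a, h'.fst_mem⟩ ⟨b, h'.snd_mem⟩ from h') hc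
      · rw [hB a h'.fst_mem, hB b h'.snd_mem] at hc
        exact cB.2 (show B.coe.Adj ⟨a, h'.fst_mem⟩ ⟨b, h'.snd_mem⟩ from h') hc
    case refine_2 =>
      intro c
      apply Subtype.ext
      funext v
      by_cases hv : v ∈ A.verts <;> simp [hv]
    case refine_3 =>
      rintro ⟨⟨cA, cB⟩, hab⟩
      have hB : ∀ (v : V) (hv : v ∈ B.verts),
          (if hv' : v ∈ A.verts then cA.1 ⟨v, hv'⟩
            else cB.1 ⟨v, (hall v).resolve_left hv'⟩) = cB.1 ⟨v, hv⟩ := by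
        intro v hv
        by_cases hv' : v ∈ A.verts
        · rw [dif_pos hv']
          have hvT : v ∈ T := hTi ▸ ⟨hv', hv⟩
          exact congrFun (congrArg Subtype.val hab) ⟨v, hvT⟩
        · rw [dif_neg hv']
      apply Subtype.ext
      refine Prod.ext (Subtype.ext (funext fun v => ?_)) (Subtype.ext (funext fun v => ?_))
      · exact dif_pos v.2
      · exact hB v.1 v.2
  show Nat.card {c : V → Fin x // ∀ ⦃a b⦄, K.Adj a b → c a ≠ c b} * x.descFactorial r = _
  rw [Nat.card_congr e1, ← card_inj T r x hcard]
  exact main_count uA uB (res_fiber_const A T hsubA hadjA) (res_fiber_const B T hsubB hadjB)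
end

section
/- Let G_{n,k} be the graph obtained from the complete graph K_k by attaching an ear (path) with n-k internal vertices between two distinct vertices of the clique. Then P(G_{n,k}, x) = (x-1)_{k-1}·((x-1)^{n-k+1} + (-1)^{n-k}) for all natural numbers x, where (y)_j is the falling factorial. -/
/-- The graph `G_{n,k}` on `n` vertices: a `k`-clique (vertices `0, …, k-1`) together
with an ear with `n - k` internal vertices `k, …, n-1` joining the clique vertices
`0` and `1`. -/
def Gnk (n k : ℕ) : SimpleGraph (Fin n) :=
  SimpleGraph.fromRel (fun a b =>
    ((a : ℕ) < k ∧ (b : ℕ) < k) ∨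
    (k ≤ (a : ℕ) ∧ (b : ℕ) = (a : ℕ) + 1) ∨
    ((a : ℕ) = 0 ∧ (b : ℕ) = k) ∨
    ((a : ℕ) = n - 1 ∧ (b : ℕ) = 1))

namespace Stmt10Aux

/-- Chain condition: the sequence `a, h 0, …, h (m-1), b` has all consecutive entries
distinct.  Encoded as a pointwise comparison of the "cons" and "snoc" shifts. -/
def Mid {x m : ℕ} (a b : Fin x) (h : Fin m → Fin x) : Prop :=
  ∀ i : Fin (m+1), (Fin.cons a h : Fin (m+1) → Fin x) i ≠ (Fin.snoc h b : Fin (m+1) → Fin x) i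

lemma cons_val_pos {α : Type*} {m : ℕ} (a : α) (h : Fin m → α) (i : Fin (m+1))
    (hi : (i : ℕ) ≠ 0) : (Fin.cons a h : Fin (m+1) → α) i = h ⟨(i : ℕ) - 1, by omega⟩ := by
  obtain ⟨iv, hlt⟩ := i
  cases iv with
  | zero => exact absurd rfl hi
  | succ j => rfl

lemma snoc_val_lt {α : Type*} {m : ℕ} (h : Fin m → α) (b : α) (i : Fin (m+1))
    (hi : (i : ℕ) < m) : (Fin.snoc h b : Fin (m+1) → α) i = h ⟨(i : ℕ), hi⟩ := by
  simp only [Fin.snoc, hi, dif_pos]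
  rfl

lemma snoc_val_last {α : Type*} {m : ℕ} (h : Fin m → α) (b : α) (i : Fin (m+1))
    (hi : (i : ℕ) = m) : (Fin.snoc h b : Fin (m+1) → α) i = b := by
  have hi' : i = Fin.last m := Fin.ext hi
  rw [hi', Fin.snoc_last]

lemma snoc_zero' {α : Type*} {m : ℕ} (h : Fin (m+1) → α) (b : α) :
    (Fin.snoc h b : Fin (m+2) → α) 0 = h 0 := by
  rw [snoc_val_lt h b 0 (by simp)]
  congr 1

lemma snoc_cons_succ {α : Type*} {m : ℕ} (c : α) (h : Fin m → α) (b : α) (j : Fin (m+1)) :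
    (Fin.snoc (Fin.cons c h) b : Fin (m+2) → α) j.succ = (Fin.snoc h b : Fin (m+1) → α) j := by
  rcases Nat.lt_or_ge (j : ℕ) m with hj | hj
  · rw [snoc_val_lt (Fin.cons c h) b j.succ (by simp; omega), snoc_val_lt h b j hj]
    rfl
  · have hjm : (j : ℕ) = m := le_antisymm (Nat.lt_succ_iff.mp j.2) hj
    rw [snoc_val_last (Fin.cons c h) b j.succ (by simp [hjm]), snoc_val_last h b j hjm]

lemma mid_zero {x : ℕ} (a b : Fin x) (h : Fin 0 → Fin x) : Mid a b h ↔ a ≠ b := by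
  constructor
  · intro H
    have := H 0
    rwa [Fin.cons_zero, snoc_val_last h b 0 rfl] at this
  · intro hab i
    have hi0 : i = 0 := Fin.ext (by omega)
    rw [hi0, Fin.cons_zero, snoc_val_last h b 0 rfl]
    exact hab

lemma mid_succ {x m : ℕ} (a b c : Fin x) (h : Fin m → Fin x) :
    Mid a b (Fin.cons c h) ↔ a ≠ c ∧ Mid c b h := by
  constructor
  · intro H
    refine ⟨?_, fun j => ?_⟩
    · have := H 0
      rwa [Fin.cons_zero, snoc_zero', Fin.cons_zero] at this
    · have := H j.succ
      rwa [Fin.cons_succ, snoc_cons_succ] at this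
  · rintro ⟨hac, H⟩ i
    refine Fin.cases ?_ (fun j => ?_) i
    · rw [Fin.cons_zero, snoc_zero', Fin.cons_zero]
      exact hac
    · rw [Fin.cons_succ, snoc_cons_succ]
      exact H j

lemma card_mid (x : ℕ) : ∀ (m : ℕ) (a b : Fin x),
    (x : ℤ) * Nat.card {h : Fin m → Fin x // Mid a b h}
      = ((x : ℤ) - 1) ^ (m+1) - (-1 : ℤ) ^ (m+1)
        + (if a = b then ((-1 : ℤ)) ^ (m+1) * (x : ℤ) else 0) := by
  intro m
  induction m with
  | zero =>
    intro a b
    rcases eq_or_ne a b with hab | hab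
    · subst hab
      have : IsEmpty {h : Fin 0 → Fin x // Mid a a h} :=
        ⟨fun h => ((mid_zero a a h.1).mp h.2) rfl⟩
      rw [Nat.card_of_isEmpty]
      simp only [if_pos rfl]
      push_cast
      ring
    · have e1 : {h : Fin 0 → Fin x // Mid a b h} ≃ (Fin 0 → Fin x) :=
        Equiv.subtypeUnivEquiv (fun h => (mid_zero a b h).mpr hab)
      rw [Nat.card_congr e1]
      have : Nat.card (Fin 0 → Fin x) = 1 := by
        simp [Nat.card_eq_fintype_card]
      rw [this, if_neg hab]
      push_cast
      ring
  | succ m ih =>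
    intro a b
    classical
    have e1 : {h : Fin (m+1) → Fin x // Mid a b h} ≃
        (c : Fin x) × {h : Fin m → Fin x // a ≠ c ∧ Mid c b h} :=
      { toFun := fun H => ⟨H.1 0, Fin.tail H.1, by
          have h2 := H.2
          rw [← Fin.cons_self_tail H.1] at h2
          exact (mid_succ a b (H.1 0) (Fin.tail H.1)).mp h2⟩
        invFun := fun S => ⟨Fin.cons S.1 S.2.1, (mid_succ a b S.1 S.2.1).mpr ⟨S.2.2.1, S.2.2.2⟩⟩
        left_inv := fun H => Subtype.ext (Fin.cons_self_tail H.1)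
        right_inv := fun S => rfl }
    rw [Nat.card_congr e1]
    have hsum : Nat.card ((c : Fin x) × {h : Fin m → Fin x // a ≠ c ∧ Mid c b h})
        = ∑ c : Fin x, Nat.card {h : Fin m → Fin x // a ≠ c ∧ Mid c b h} := by
      simp [Nat.card_eq_fintype_card, Fintype.card_sigma]
    rw [hsum]
    push_cast
    rw [Finset.mul_sum]
    have hterm : ∀ c : Fin x,
        (x : ℤ) * (Nat.card {h : Fin m → Fin x // a ≠ c ∧ Mid c b h} : ℤ)
          = if a = c then 0 else
              (((x : ℤ) - 1) ^ (m+1) - (-1 : ℤ) ^ (m+1)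
                + (if c = b then ((-1 : ℤ)) ^ (m+1) * (x : ℤ) else 0)) := by
      intro c
      rcases eq_or_ne a c with hac | hac
      · have : IsEmpty {h : Fin m → Fin x // a ≠ c ∧ Mid c b h} :=
          ⟨fun h => h.2.1 hac⟩
        rw [Nat.card_of_isEmpty, if_pos hac]
        push_cast
        ring
      · have e2 : {h : Fin m → Fin x // a ≠ c ∧ Mid c b h} ≃ {h : Fin m → Fin x // Mid c b h} :=
          Equiv.subtypeEquivRight (fun h => and_iff_right hac)
        rw [Nat.card_congr e2, if_neg hac]
        exact ih c b
    rw [Finset.sum_congr rfl (fun c _ => hterm c)]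
    have hsplit : ∀ c : Fin x,
        (if a = c then (0:ℤ) else
          (((x : ℤ) - 1) ^ (m+1) - (-1 : ℤ) ^ (m+1)
            + (if c = b then ((-1 : ℤ)) ^ (m+1) * (x : ℤ) else 0)))
        = (((x : ℤ) - 1) ^ (m+1) - (-1 : ℤ) ^ (m+1)
            + (if c = b then ((-1 : ℤ)) ^ (m+1) * (x : ℤ) else 0))
          - (if a = c then
              (((x : ℤ) - 1) ^ (m+1) - (-1 : ℤ) ^ (m+1)
                + (if c = b then ((-1 : ℤ)) ^ (m+1) * (x : ℤ) else 0)) else 0) := by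
      intro c
      split_ifs <;> ring
    rw [Finset.sum_congr rfl (fun c _ => hsplit c), Finset.sum_sub_distrib]
    rw [Finset.sum_add_distrib, Finset.sum_const, Finset.card_univ, Fintype.card_fin]
    rw [Finset.sum_ite_eq (Finset.univ : Finset (Fin x)) a, if_pos (Finset.mem_univ a)]
    rw [Finset.sum_ite_eq' (Finset.univ : Finset (Fin x)) b
      (fun _ => ((-1 : ℤ)) ^ (m+1) * (x : ℤ)), if_pos (Finset.mem_univ b)]
    rcases eq_or_ne a b with hab | hab
    · rw [if_pos hab, if_pos hab]
      push_cast
      ring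
    · rw [if_neg hab, if_neg hab]
      push_cast
      ring

/-- Split a coloring of `Fin n` into its clique part and its ear part. -/
def split (n k x : ℕ) (hkn : k ≤ n) :
    (Fin n → Fin x) ≃ (Fin k → Fin x) × (Fin (n - k) → Fin x) where
  toFun c := (fun i => c ⟨(i : ℕ), lt_of_lt_of_le i.2 hkn⟩,
              fun j => c ⟨k + (j : ℕ), lt_tsub_iff_left.mp j.2⟩)
  invFun p v := if hv : (v : ℕ) < k then p.1 ⟨(v : ℕ), hv⟩
    else p.2 ⟨(v : ℕ) - k, tsub_lt_tsub_right_of_le (le_of_not_gt hv) v.2⟩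
  left_inv c := by
    funext v
    dsimp only
    split_ifs with hv
    · rfl
    · congr 1
      exact Fin.ext (by simp [Nat.add_sub_cancel' (le_of_not_gt hv)])
  right_inv p := by
    obtain ⟨f, h⟩ := p
    dsimp only
    congr 1
    · funext i
      rw [dif_pos (show ((⟨(i : ℕ), lt_of_lt_of_le i.2 hkn⟩ : Fin n) : ℕ) < k from i.2)]
    · funext j
      rw [dif_neg (show ¬ ((⟨k + (j : ℕ), lt_tsub_iff_left.mp j.2⟩ : Fin n) : ℕ) < k by simp)]
      congr 1
      exact Fin.ext (by simp)

lemma key_iff (n k x : ℕ) (hk : 3 ≤ k) (hn : k < n) (c : Fin n → Fin x) :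
    (∀ ⦃a b⦄, (Gnk n k).Adj a b → c a ≠ c b) ↔
      (Function.Injective (fun i : Fin k => c ⟨(i : ℕ), lt_of_lt_of_le i.2 hn.le⟩) ∧
        Mid (c ⟨0, Nat.lt_of_lt_of_le (Nat.lt_of_lt_of_le (Nat.succ_pos 2) hk) hn.le⟩)
          (c ⟨1, Nat.lt_of_lt_of_le (Nat.lt_of_le_of_lt (Nat.le_succ 1)
            (Nat.lt_of_lt_of_le (Nat.lt_succ_self 2) hk)) hn.le⟩)
          (fun j : Fin (n - k) => c ⟨k + (j : ℕ), lt_tsub_iff_left.mp j.2⟩)) := by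
  have hadj : ∀ u v : Fin n, (Gnk n k).Adj u v ↔ u ≠ v ∧
      ((((u:ℕ) < k ∧ (v:ℕ) < k) ∨ (k ≤ (u:ℕ) ∧ (v:ℕ) = (u:ℕ)+1) ∨
        ((u:ℕ) = 0 ∧ (v:ℕ) = k) ∨ ((u:ℕ) = n-1 ∧ (v:ℕ) = 1)) ∨
       (((v:ℕ) < k ∧ (u:ℕ) < k) ∨ (k ≤ (v:ℕ) ∧ (u:ℕ) = (v:ℕ)+1) ∨
        ((v:ℕ) = 0 ∧ (u:ℕ) = k) ∨ ((v:ℕ) = n-1 ∧ (u:ℕ) = 1))) :=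
    fun u v => SimpleGraph.fromRel_adj _ u v
  have h0n : 0 < n := by omega
  have h1n : 1 < n := by omega
  have hmk : 0 < n - k := by omega
  have hmknz : n - k ≠ 0 := by omega
  constructor
  · intro hc
    have adj1 : ∀ u v : Fin n, (u:ℕ) ≠ (v:ℕ) →
        (((u:ℕ) < k ∧ (v:ℕ) < k) ∨ (k ≤ (u:ℕ) ∧ (v:ℕ) = (u:ℕ)+1) ∨
          ((u:ℕ) = 0 ∧ (v:ℕ) = k) ∨ ((u:ℕ) = n-1 ∧ (v:ℕ) = 1)) →
        c u ≠ c v := fun u v h1 h2 =>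
      hc ((hadj u v).mpr ⟨fun he => h1 (congrArg Fin.val he), Or.inl h2⟩)
    constructor
    · intro i j hij
      by_contra hne
      exact adj1 ⟨(i:ℕ), lt_trans i.2 hn⟩ ⟨(j:ℕ), lt_trans j.2 hn⟩
        (fun h => hne (Fin.ext h)) (Or.inl ⟨i.2, j.2⟩) hij
    · intro idx
      obtain ⟨iv, hiv⟩ := idx
      rcases eq_or_ne iv 0 with rfl | h0
      · have hne1 : (0:ℕ) ≠ k + 0 := by omega
        rw [snoc_val_lt _ _ ⟨0, hiv⟩ hmk]
        exact adj1 ⟨0, h0n⟩ ⟨k + 0, hn⟩ hne1 (Or.inr (Or.inr (Or.inl ⟨rfl, rfl⟩)))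
      · rcases Nat.lt_or_ge iv (n - k) with hlt | hge
        · have e_u : k + (iv - 1) < n := by omega
          have e_v : k + iv < n := by omega
          have hne2 : k + (iv - 1) ≠ k + iv := by omega
          have hcond2 : k + iv = k + (iv - 1) + 1 := by omega
          rw [cons_val_pos _ _ ⟨iv, hiv⟩ h0, snoc_val_lt _ _ ⟨iv, hiv⟩ hlt]
          exact adj1 ⟨k + (iv - 1), e_u⟩ ⟨k + iv, e_v⟩ hne2
            (Or.inr (Or.inl ⟨Nat.le_add_right k (iv - 1), hcond2⟩))
        · have hm : iv = n - k := by omega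
          have e_u : k + (iv - 1) < n := by omega
          have hne3 : k + (iv - 1) ≠ 1 := by omega
          have hcond3 : k + (iv - 1) = n - 1 := by omega
          rw [cons_val_pos _ _ ⟨iv, hiv⟩ h0, snoc_val_last _ _ ⟨iv, hiv⟩ hm]
          exact adj1 ⟨k + (iv - 1), e_u⟩ ⟨1, h1n⟩ hne3
            (Or.inr (Or.inr (Or.inr ⟨hcond3, rfl⟩)))
  · rintro ⟨hinj, hmid⟩ u v hadjuv
    rw [hadj u v] at hadjuv
    obtain ⟨hne, hr⟩ := hadjuv
    have key : ∀ u v : Fin n, u ≠ v →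
        (((u:ℕ) < k ∧ (v:ℕ) < k) ∨ (k ≤ (u:ℕ) ∧ (v:ℕ) = (u:ℕ)+1) ∨
          ((u:ℕ) = 0 ∧ (v:ℕ) = k) ∨ ((u:ℕ) = n-1 ∧ (v:ℕ) = 1)) →
        c u ≠ c v := by
      intro u v huv hr
      rcases hr with ⟨hu, hv⟩ | ⟨hu, hv⟩ | ⟨hu, hv⟩ | ⟨hu, hv⟩
      · intro hEq
        have h2 := @hinj ⟨(u:ℕ), hu⟩ ⟨(v:ℕ), hv⟩ hEq
        have h3 := congrArg Fin.val h2
        exact huv (Fin.ext h3)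
      · have hvn : (u:ℕ) + 1 < n := hv ▸ v.2
        have hsub : (u:ℕ) - k + 1 < n - k := by omega
        have H := hmid ⟨(u:ℕ) - k + 1, Nat.lt_succ_of_lt hsub⟩
        rw [cons_val_pos _ _ ⟨(u:ℕ) - k + 1, Nat.lt_succ_of_lt hsub⟩ (Nat.succ_ne_zero _),
          snoc_val_lt _ _ ⟨(u:ℕ) - k + 1, Nat.lt_succ_of_lt hsub⟩ hsub] at H
        have hval1 : (u:ℕ) = k + ((u:ℕ) - k + 1 - 1) := by omega
        have hval2 : (v:ℕ) = k + ((u:ℕ) - k + 1) := by omega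
        have hb1 : k + ((u:ℕ) - k + 1 - 1) < n := by omega
        have hb2 : k + ((u:ℕ) - k + 1) < n := by omega
        rw [show u = (⟨k + ((u:ℕ) - k + 1 - 1), hb1⟩ : Fin n) from Fin.ext hval1,
          show v = (⟨k + ((u:ℕ) - k + 1), hb2⟩ : Fin n) from Fin.ext hval2]
        exact H
      · have H := hmid ⟨0, Nat.succ_pos (n - k)⟩
        rw [snoc_val_lt _ _ ⟨0, Nat.succ_pos (n - k)⟩ hmk] at H
        rw [show u = (⟨0, h0n⟩ : Fin n) from Fin.ext hu,
          show v = (⟨k + 0, hn⟩ : Fin n) from Fin.ext hv]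
        exact H
      · have H := hmid ⟨n - k, Nat.lt_succ_self (n - k)⟩
        rw [cons_val_pos _ _ ⟨n - k, Nat.lt_succ_self (n - k)⟩ hmknz,
          snoc_val_last _ _ ⟨n - k, Nat.lt_succ_self (n - k)⟩ rfl] at H
        have hval4 : (u:ℕ) = k + (n - k - 1) := by omega
        have hb4 : k + (n - k - 1) < n := by omega
        rw [show u = (⟨k + (n - k - 1), hb4⟩ : Fin n) from Fin.ext hval4,
          show v = (⟨1, h1n⟩ : Fin n) from Fin.ext hv]
        exact H
    rcases hr with h | h
    · exact key u v hne h
    · exact Ne.symm (key v u (Ne.symm hne) h)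

end Stmt10Aux

/-- `P(G_{n,k}, x) = (x-1)_{k-1}·((x-1)^{n-k+1} + (-1)^{n-k})` for `n > k ≥ 3`. -/
theorem stmt_10 (n k x : ℕ) (hk : 3 ≤ k) (hn : k < n) :
    (properColorings (Gnk n k) x : ℤ) =
      (descPochhammer ℤ (k - 1)).eval ((x : ℤ) - 1) *
        (((x : ℤ) - 1) ^ (n - k + 1) + (-1 : ℤ) ^ (n - k)) := by
  classical
  have h0k : 0 < k := by omega
  have h1k : 1 < k := by omega
  have h0n : 0 < n := by omega
  have e_main : {c : Fin n → Fin x // ∀ ⦃a b⦄, (Gnk n k).Adj a b → c a ≠ c b} ≃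
      (f : Fin k → Fin x) × {h : Fin (n - k) → Fin x //
        Function.Injective f ∧ Stmt10Aux.Mid (f ⟨0, h0k⟩) (f ⟨1, h1k⟩) h} :=
    (Equiv.subtypeEquiv (Stmt10Aux.split n k x hn.le)
        (fun c => Stmt10Aux.key_iff n k x hk hn c)).trans
      (Equiv.subtypeProdEquivSigmaSubtype
        (fun (f : Fin k → Fin x) (h : Fin (n - k) → Fin x) => Function.Injective f ∧ Stmt10Aux.Mid (f ⟨0, h0k⟩) (f ⟨1, h1k⟩) h))
  have hcount : properColorings (Gnk n k) x
      = ∑ f : Fin k → Fin x, Nat.card {h : Fin (n - k) → Fin x //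
          Function.Injective f ∧ Stmt10Aux.Mid (f ⟨0, h0k⟩) (f ⟨1, h1k⟩) h} := by
    unfold properColorings
    rw [Nat.card_congr e_main]
    simp [Nat.card_eq_fintype_card, Fintype.card_sigma]
  have hterm : ∀ f : Fin k → Fin x,
      (x:ℤ) * (Nat.card {h : Fin (n - k) → Fin x //
          Function.Injective f ∧ Stmt10Aux.Mid (f ⟨0, h0k⟩) (f ⟨1, h1k⟩) h} : ℤ)
        = if Function.Injective f then ((x:ℤ)-1)^(n-k+1) - (-1:ℤ)^(n-k+1) else 0 := by
    intro f
    by_cases hf : Function.Injective f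
    · rw [if_pos hf]
      have e2 : {h : Fin (n - k) → Fin x //
            Function.Injective f ∧ Stmt10Aux.Mid (f ⟨0, h0k⟩) (f ⟨1, h1k⟩) h}
          ≃ {h : Fin (n - k) → Fin x // Stmt10Aux.Mid (f ⟨0, h0k⟩) (f ⟨1, h1k⟩) h} :=
        Equiv.subtypeEquivRight (fun h => and_iff_right hf)
      rw [Nat.card_congr e2]
      have hne : f ⟨0, h0k⟩ ≠ f ⟨1, h1k⟩ := by
        intro hEq
        have h2 := hf hEq
        have h3 : (0:ℕ) = 1 := congrArg Fin.val h2
        exact absurd h3 Nat.zero_ne_one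
      have hcm := Stmt10Aux.card_mid x (n - k) (f ⟨0, h0k⟩) (f ⟨1, h1k⟩)
      rw [if_neg hne, add_zero] at hcm
      exact hcm
    · rw [if_neg hf]
      have : IsEmpty {h : Fin (n - k) → Fin x //
          Function.Injective f ∧ Stmt10Aux.Mid (f ⟨0, h0k⟩) (f ⟨1, h1k⟩) h} :=
        ⟨fun h => hf h.2.1⟩
      rw [Nat.card_of_isEmpty]
      simp
  have hx' : (x:ℤ) * (properColorings (Gnk n k) x : ℤ)
      = ((Finset.univ.filter (fun f : Fin k → Fin x => Function.Injective f)).card : ℤ)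
        * (((x:ℤ)-1)^(n-k+1) - (-1:ℤ)^(n-k+1)) := by
    rw [hcount]
    push_cast
    rw [Finset.mul_sum, Finset.sum_congr rfl (fun f _ => hterm f), ← Finset.sum_filter,
      Finset.sum_const, nsmul_eq_mul]
  have hfilter : (Finset.univ.filter (fun f : Fin k → Fin x => Function.Injective f)).card
      = x.descFactorial k := by
    rw [← Fintype.card_subtype,
      Fintype.card_congr (Equiv.subtypeInjectiveEquivEmbedding (Fin k) (Fin x)),
      Fintype.card_embedding_eq, Fintype.card_fin, Fintype.card_fin]
  have hdesc : ((x.descFactorial k : ℕ) : ℤ)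
      = (x:ℤ) * (descPochhammer ℤ (k-1)).eval ((x:ℤ) - 1) := by
    have h1 : (descPochhammer ℤ k).eval ((x:ℕ):ℤ) = x.descFactorial k := by
      exact_mod_cast descPochhammer_eval_eq_descFactorial ℤ x k
    rw [← h1]
    conv_lhs => rw [show k = (k-1)+1 from (Nat.succ_pred_eq_of_pos h0k).symm]
    rw [descPochhammer_succ_left, Polynomial.eval_mul, Polynomial.eval_comp,
      Polynomial.eval_X, Polynomial.eval_sub, Polynomial.eval_X, Polynomial.eval_one]
  rcases Nat.eq_zero_or_pos x with rfl | hx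
  · have he : IsEmpty {c : Fin n → Fin 0 // ∀ ⦃a b⦄, (Gnk n k).Adj a b → c a ≠ c b} :=
      ⟨fun s => (s.1 ⟨0, h0n⟩).elim0⟩
    unfold properColorings
    rw [Nat.card_of_isEmpty]
    have hz : (((0:ℕ):ℤ) - 1) ^ (n-k+1) + (-1:ℤ)^(n-k) = 0 := by
      rw [Nat.cast_zero, zero_sub, pow_succ]
      ring
    rw [hz, mul_zero, Nat.cast_zero]
  · have hx0 : (x:ℤ) ≠ 0 := by exact_mod_cast hx.ne'
    apply mul_left_cancel₀ hx0
    rw [hx', hfilter, hdesc]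
    ring
end

section
/- Let G be a connected k-chromatic graph with independence number 2 that has a clique cut-set S of size at most two. Then the clique number of G equals k. -/
open Finset

section Aux

variable {V : Type*}

/-- Injection of a smaller finset into a bigger one. -/
lemma aux_exists_inj [Nonempty V] (s t : Finset V) (h : s.card ≤ t.card) :
    ∃ e : V → V, (∀ v ∈ s, e v ∈ t) ∧ (∀ u ∈ s, ∀ v ∈ s, e u = e v → u = v) := by
  obtain ⟨f, hmaps, hinj⟩ := Set.Finite.exists_injOn_of_encard_le
    (s := (s : Set V)) (t := (t : Set V)) s.finite_toSet
    (by simpa using (Nat.cast_le (α := ℕ∞)).mpr h)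
  exact ⟨f, fun v hv => hmaps hv, fun u hu v hv he => hinj hu hv he⟩

/-- Build a coloring from a clique `C` and a non-adjacency pairing of `V \ C` into `C`. -/
lemma aux_colorable (G : SimpleGraph V) [DecidableEq V]
    (C : Finset V) (f : V → V)
    (hmem : ∀ v, v ∉ C → f v ∈ C)
    (hnadj : ∀ v, v ∉ C → ¬ G.Adj v (f v))
    (hinj : ∀ u v, u ∉ C → v ∉ C → f u = f v → u = v) :
    G.Colorable C.card := by
  have col : G.Coloring {x // x ∈ C} := by
    refine SimpleGraph.Coloring.mk
      (fun v => if h : v ∈ C then ⟨v, h⟩ else ⟨f v, hmem v h⟩) ?_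
    intro u v huv
    by_cases hu : u ∈ C <;> by_cases hv : v ∈ C
    · simp only [dif_pos hu, dif_pos hv]
      exact fun h => G.ne_of_adj huv (congrArg Subtype.val h)
    · simp only [dif_pos hu, dif_neg hv]
      intro h
      have h' : u = f v := congrArg Subtype.val h
      exact hnadj v hv (h' ▸ huv.symm)
    · simp only [dif_neg hu, dif_pos hv]
      intro h
      have h' : f u = v := congrArg Subtype.val h
      exact hnadj u hu (h'.symm ▸ huv)
    · simp only [dif_neg hu, dif_neg hv]
      intro h
      exact G.ne_of_adj huv (hinj u v hu hv (congrArg Subtype.val h))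
  have := col.colorable
  simpa [Fintype.card_coe] using this

lemma aux_clique_insert [DecidableEq V] (G : SimpleGraph V) (s : V) (A : Finset V)
    (hA : G.IsClique (A : Set V)) (h : ∀ a ∈ A, G.Adj s a) :
    G.IsClique ((insert s A : Finset V) : Set V) := by
  rw [coe_insert]
  exact hA.insert (fun b hb _ => h b hb)

/-- Case: no cut vertices, `|B| ≤ |A|`. -/
lemma aux_case0 [Nonempty V] [DecidableEq V] (G : SimpleGraph V)
    (A B : Finset V)
    (hcover : ∀ v : V, v ∈ A ∨ v ∈ B)
    (hA : G.IsClique (A : Set V))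
    (hAB : ∀ a ∈ A, ∀ b ∈ B, ¬ G.Adj a b)
    (hcard : B.card ≤ A.card) :
    ∃ C : Finset V, G.IsClique (C : Set V) ∧ G.Colorable C.card := by
  obtain ⟨e, he1, he2⟩ := aux_exists_inj B A hcard
  refine ⟨A, hA, aux_colorable G A e ?_ ?_ ?_⟩
  · intro v hv; exact he1 v ((hcover v).resolve_left hv)
  · intro v hv hadj
    have hvB := (hcover v).resolve_left hv
    exact hAB _ (he1 v hvB) v hvB hadj.symm
  · intro u v hu hv h
    exact he2 u ((hcover u).resolve_left hu) v ((hcover v).resolve_left hv) h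

/-- Case: one cut vertex `s`, complete to `A`. -/
lemma aux_case1 [Nonempty V] [DecidableEq V] (G : SimpleGraph V)
    (A B : Finset V) (s : V)
    (hsA' : s ∉ A) (hsB' : s ∉ B)
    (hcover : ∀ v : V, v ∈ A ∨ v ∈ B ∨ v = s)
    (hA : G.IsClique (A : Set V)) (hB : G.IsClique (B : Set V))
    (hAB : ∀ a ∈ A, ∀ b ∈ B, ¬ G.Adj a b)
    (hsA : ∀ a ∈ A, G.Adj s a) :
    ∃ C : Finset V, G.IsClique (C : Set V) ∧ G.Colorable C.card := by
  by_cases h1 : B.card ≤ A.card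
  · obtain ⟨e, he1, he2⟩ := aux_exists_inj B A h1
    refine ⟨insert s A, aux_clique_insert G s A hA hsA,
      aux_colorable G _ e ?_ ?_ ?_⟩
    · intro v hv
      simp only [mem_insert, not_or] at hv
      have hvB : v ∈ B := by rcases hcover v with h | h | h <;> tauto
      exact mem_insert_of_mem (he1 v hvB)
    · intro v hv hadj
      simp only [mem_insert, not_or] at hv
      have hvB : v ∈ B := by rcases hcover v with h | h | h <;> tauto
      exact hAB _ (he1 v hvB) v hvB hadj.symm
    · intro u v hu hv h
      simp only [mem_insert, not_or] at hu hv
      have huB : u ∈ B := by rcases hcover u with h' | h' | h' <;> tauto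
      have hvB : v ∈ B := by rcases hcover v with h' | h' | h' <;> tauto
      exact he2 u huB v hvB h
  · have h2 : A.card + 1 ≤ B.card := by omega
    by_cases hsB : ∀ b ∈ B, G.Adj s b
    · obtain ⟨e, he1, he2⟩ := aux_exists_inj A B (by omega)
      refine ⟨insert s B, aux_clique_insert G s B hB hsB,
        aux_colorable G _ e ?_ ?_ ?_⟩
      · intro v hv
        simp only [mem_insert, not_or] at hv
        have hvA : v ∈ A := by rcases hcover v with h | h | h <;> tauto
        exact mem_insert_of_mem (he1 v hvA)
      · intro v hv hadj
        simp only [mem_insert, not_or] at hv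
        have hvA : v ∈ A := by rcases hcover v with h | h | h <;> tauto
        exact hAB v hvA _ (he1 v hvA) hadj
      · intro u v hu hv h
        simp only [mem_insert, not_or] at hu hv
        have huA : u ∈ A := by rcases hcover u with h' | h' | h' <;> tauto
        have hvA : v ∈ A := by rcases hcover v with h' | h' | h' <;> tauto
        exact he2 u huA v hvA h
    · push_neg at hsB
      obtain ⟨b0, hb0B, hnsb0⟩ := hsB
      have hcB : (B.erase b0).card = B.card - 1 := card_erase_of_mem hb0B
      obtain ⟨e, he1, he2⟩ := aux_exists_inj A (B.erase b0) (by omega)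
      refine ⟨B, hB, aux_colorable G B (fun v => if v = s then b0 else e v) ?_ ?_ ?_⟩
      · intro v hv
        by_cases hvs : v = s
        · simpa [hvs] using hb0B
        · have hvA : v ∈ A := by rcases hcover v with h | h | h <;> tauto
          simpa [hvs] using mem_of_mem_erase (he1 v hvA)
      · intro v hv hadj
        by_cases hvs : v = s
        · rw [hvs] at hadj; simp only [if_pos rfl] at hadj; exact hnsb0 hadj
        · simp only [if_neg hvs] at hadj
          have hvA : v ∈ A := by rcases hcover v with h | h | h <;> tauto
          exact hAB v hvA _ (mem_of_mem_erase (he1 v hvA)) hadj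
      · intro u v hu hv h
        by_cases hus : u = s <;> by_cases hvs : v = s
        · rw [hus, hvs]
        · have hvA : v ∈ A := by rcases hcover v with h' | h' | h' <;> tauto
          simp only [if_pos hus, if_neg hvs] at h
          exact absurd h.symm (ne_of_mem_erase (he1 v hvA))
        · have huA : u ∈ A := by rcases hcover u with h' | h' | h' <;> tauto
          simp only [if_neg hus, if_pos hvs] at h
          exact absurd h (ne_of_mem_erase (he1 u huA))
        · simp only [if_neg hus, if_neg hvs] at h
          have huA : u ∈ A := by rcases hcover u with h' | h' | h' <;> tauto
          have hvA : v ∈ A := by rcases hcover v with h' | h' | h' <;> tauto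
          exact he2 u huA v hvA h

end Aux
section Aux2

variable {V : Type*}

/-- Coloring from a clique, one special pair, and a base injection. -/
lemma aux_pair1 [DecidableEq V] (G : SimpleGraph V)
    (C : Finset V) (hC : G.IsClique (C : Set V))
    (x1 y1 : V) (D : Finset V) (e : V → V)
    (hx1C : x1 ∉ C) (hy1 : y1 ∈ C) (hn1 : ¬ G.Adj x1 y1)
    (hDx1 : x1 ∉ D)
    (he1 : ∀ v ∈ D, e v ∈ C)
    (heinj : ∀ u ∈ D, ∀ v ∈ D, e u = e v → u = v)
    (hey1 : ∀ v ∈ D, e v ≠ y1)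
    (hne : ∀ v ∈ D, ¬ G.Adj v (e v))
    (hcov : ∀ v, v ∉ C → v = x1 ∨ v ∈ D) :
    ∃ C' : Finset V, G.IsClique (C' : Set V) ∧ G.Colorable C'.card := by
  have hD1 : ∀ w ∈ D, w ≠ x1 := fun w hw h => hDx1 (h ▸ hw)
  refine ⟨C, hC, aux_colorable G C (fun v => if v = x1 then y1 else e v) ?_ ?_ ?_⟩
  · intro v hv
    show (if v = x1 then y1 else e v) ∈ C
    rcases hcov v hv with rfl | hvD
    · simp [hy1]
    · rw [if_neg (hD1 v hvD)]; exact he1 v hvD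
  · intro v hv hadj
    replace hadj : G.Adj v (if v = x1 then y1 else e v) := hadj
    rcases hcov v hv with rfl | hvD
    · rw [if_pos rfl] at hadj; exact hn1 hadj
    · rw [if_neg (hD1 v hvD)] at hadj; exact hne v hvD hadj
  · intro u v hu hv h
    replace h : (if u = x1 then y1 else e u) = (if v = x1 then y1 else e v) := h
    rcases hcov u hu with rfl | huD <;> rcases hcov v hv with rfl | hvD
    · rfl
    · rw [if_pos rfl, if_neg (hD1 v hvD)] at h
      exact absurd h.symm (hey1 v hvD)
    · rw [if_pos rfl, if_neg (hD1 u huD)] at h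
      exact absurd h (hey1 u huD)
    · rw [if_neg (hD1 u huD), if_neg (hD1 v hvD)] at h
      exact heinj u huD v hvD h

/-- Coloring from a clique, two special pairs, and a base injection. -/
lemma aux_pair2 [DecidableEq V] (G : SimpleGraph V)
    (C : Finset V) (hC : G.IsClique (C : Set V))
    (x1 y1 x2 y2 : V) (D : Finset V) (e : V → V)
    (hx12 : x1 ≠ x2) (hy12 : y1 ≠ y2)
    (hx1C : x1 ∉ C) (hx2C : x2 ∉ C) (hy1 : y1 ∈ C) (hy2 : y2 ∈ C)
    (hn1 : ¬ G.Adj x1 y1) (hn2 : ¬ G.Adj x2 y2)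
    (hDx1 : x1 ∉ D) (hDx2 : x2 ∉ D)
    (he1 : ∀ v ∈ D, e v ∈ C)
    (heinj : ∀ u ∈ D, ∀ v ∈ D, e u = e v → u = v)
    (hey1 : ∀ v ∈ D, e v ≠ y1) (hey2 : ∀ v ∈ D, e v ≠ y2)
    (hne : ∀ v ∈ D, ¬ G.Adj v (e v))
    (hcov : ∀ v, v ∉ C → v = x1 ∨ v = x2 ∨ v ∈ D) :
    ∃ C' : Finset V, G.IsClique (C' : Set V) ∧ G.Colorable C'.card := by
  have hD1 : ∀ w ∈ D, w ≠ x1 := fun w hw h => hDx1 (h ▸ hw)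
  have hD2 : ∀ w ∈ D, w ≠ x2 := fun w hw h => hDx2 (h ▸ hw)
  refine ⟨C, hC, aux_colorable G C
    (fun v => if v = x1 then y1 else if v = x2 then y2 else e v) ?_ ?_ ?_⟩
  · intro v hv
    show (if v = x1 then y1 else if v = x2 then y2 else e v) ∈ C
    rcases hcov v hv with rfl | rfl | hvD
    · simp [hy1]
    · rw [if_neg hx12.symm, if_pos rfl]; exact hy2
    · rw [if_neg (hD1 v hvD), if_neg (hD2 v hvD)]
      exact he1 v hvD
  · intro v hv hadj
    replace hadj : G.Adj v (if v = x1 then y1 else if v = x2 then y2 else e v) := hadj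
    rcases hcov v hv with rfl | rfl | hvD
    · rw [if_pos rfl] at hadj; exact hn1 hadj
    · rw [if_neg hx12.symm, if_pos rfl] at hadj; exact hn2 hadj
    · rw [if_neg (hD1 v hvD), if_neg (hD2 v hvD)] at hadj
      exact hne v hvD hadj
  · intro u v hu hv h
    replace h : (if u = x1 then y1 else if u = x2 then y2 else e u)
        = (if v = x1 then y1 else if v = x2 then y2 else e v) := h
    have red : ∀ w ∈ D, (if w = x1 then y1 else if w = x2 then y2 else e w) = e w := by
      intro w hw
      rw [if_neg (hD1 w hw), if_neg (hD2 w hw)]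
    have redx1 : (if x1 = x1 then y1 else if x1 = x2 then y2 else e x1) = y1 := if_pos rfl
    have redx2 : (if x2 = x1 then y1 else if x2 = x2 then y2 else e x2) = y2 := by
      rw [if_neg hx12.symm, if_pos rfl]
    rcases hcov u hu with rfl | rfl | huD <;> rcases hcov v hv with rfl | rfl | hvD
    · rfl
    · rw [redx1, redx2] at h; exact absurd h hy12
    · rw [redx1, red v hvD] at h; exact absurd h.symm (hey1 v hvD)
    · rw [redx1, redx2] at h; exact absurd h.symm hy12
    · rfl
    · rw [redx2, red v hvD] at h; exact absurd h.symm (hey2 v hvD)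
    · rw [redx1, red u huD] at h; exact absurd h (hey1 u huD)
    · rw [redx2, red u huD] at h; exact absurd h (hey2 u huD)
    · rw [red u huD, red v hvD] at h; exact heinj u huD v hvD h

end Aux2
section Aux3

variable {V : Type*}

/-- Two cut vertices both complete to `A`; `s` also complete to `B`, `t` missing `b_t ∈ B`. -/
lemma aux_caseAA_mixed [Nonempty V] [DecidableEq V] (G : SimpleGraph V)
    (A B : Finset V) (s t : V) (hst : G.Adj s t)
    (htA' : t ∉ A) (htB' : t ∉ B) (hsB' : s ∉ B)
    (hcover : ∀ v : V, v ∈ A ∨ v ∈ B ∨ v = s ∨ v = t)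
    (hB : G.IsClique (B : Set V))
    (hAB : ∀ a ∈ A, ∀ b ∈ B, ¬ G.Adj a b)
    (hsB : ∀ b ∈ B, G.Adj s b)
    (b_t : V) (hbtB : b_t ∈ B) (hntb : ¬ G.Adj t b_t)
    (h2 : A.card + 1 ≤ B.card) :
    ∃ C : Finset V, G.IsClique (C : Set V) ∧ G.Colorable C.card := by
  have hcB : (B.erase b_t).card = B.card - 1 := card_erase_of_mem hbtB
  obtain ⟨e, he1, he2⟩ := aux_exists_inj A (B.erase b_t) (by omega)
  refine aux_pair1 G (insert s B) (aux_clique_insert G s B hB hsB) t b_t A e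
    ?_ (mem_insert_of_mem hbtB) hntb htA'
    (fun v hv => mem_insert_of_mem (mem_of_mem_erase (he1 v hv))) he2
    (fun v hv => ne_of_mem_erase (he1 v hv))
    (fun v hv hadj => hAB v hv _ (mem_of_mem_erase (he1 v hv)) hadj) ?_
  · simp only [mem_insert, not_or]
    exact ⟨G.ne_of_adj hst.symm, htB'⟩
  · intro v hv
    simp only [mem_insert, not_or] at hv
    rcases hcover v with h | h | h | h <;> tauto

/-- Two cut vertices, both complete to `A`. -/
lemma aux_caseAA [Nonempty V] [DecidableEq V] (G : SimpleGraph V)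
    (A B : Finset V) (s t : V) (hst : G.Adj s t)
    (hsA' : s ∉ A) (hsB' : s ∉ B) (htA' : t ∉ A) (htB' : t ∉ B)
    (hABd : ∀ a ∈ A, a ∉ B)
    (hcover : ∀ v : V, v ∈ A ∨ v ∈ B ∨ v = s ∨ v = t)
    (hA : G.IsClique (A : Set V)) (hB : G.IsClique (B : Set V))
    (hAB : ∀ a ∈ A, ∀ b ∈ B, ¬ G.Adj a b)
    (hsA : ∀ a ∈ A, G.Adj s a) (htA : ∀ a ∈ A, G.Adj t a) :
    ∃ C : Finset V, G.IsClique (C : Set V) ∧ G.Colorable C.card := by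
  have hstne : s ≠ t := G.ne_of_adj hst
  have hCAcl : G.IsClique ((insert s (insert t A) : Finset V) : Set V) := by
    refine aux_clique_insert G s _ (aux_clique_insert G t A hA htA) ?_
    intro a ha
    rcases mem_insert.mp ha with rfl | haA
    · exact hst
    · exact hsA a haA
  by_cases h1 : B.card ≤ A.card
  · obtain ⟨e, he1, he2⟩ := aux_exists_inj B A h1
    refine ⟨insert s (insert t A), hCAcl, aux_colorable G _ e ?_ ?_ ?_⟩
    · intro v hv
      simp only [mem_insert, not_or] at hv
      have hvB : v ∈ B := by rcases hcover v with h | h | h | h <;> tauto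
      exact mem_insert_of_mem (mem_insert_of_mem (he1 v hvB))
    · intro v hv hadj
      simp only [mem_insert, not_or] at hv
      have hvB : v ∈ B := by rcases hcover v with h | h | h | h <;> tauto
      exact hAB _ (he1 v hvB) v hvB hadj.symm
    · intro u v hu hv h
      simp only [mem_insert, not_or] at hu hv
      have huB : u ∈ B := by rcases hcover u with h' | h' | h' | h' <;> tauto
      have hvB : v ∈ B := by rcases hcover v with h' | h' | h' | h' <;> tauto
      exact he2 u huB v hvB h
  · have h2 : A.card + 1 ≤ B.card := by omega
    by_cases hsB : ∀ b ∈ B, G.Adj s b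
    · by_cases htB : ∀ b ∈ B, G.Adj t b
      · obtain ⟨e, he1, he2⟩ := aux_exists_inj A B (by omega)
        have hCcl : G.IsClique ((insert s (insert t B) : Finset V) : Set V) := by
          refine aux_clique_insert G s _ (aux_clique_insert G t B hB htB) ?_
          intro b hb
          rcases mem_insert.mp hb with rfl | hbB
          · exact hst
          · exact hsB b hbB
        refine ⟨insert s (insert t B), hCcl, aux_colorable G _ e ?_ ?_ ?_⟩
        · intro v hv
          simp only [mem_insert, not_or] at hv
          have hvA : v ∈ A := by rcases hcover v with h | h | h | h <;> tauto
          exact mem_insert_of_mem (mem_insert_of_mem (he1 v hvA))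
        · intro v hv hadj
          simp only [mem_insert, not_or] at hv
          have hvA : v ∈ A := by rcases hcover v with h | h | h | h <;> tauto
          exact hAB v hvA _ (he1 v hvA) hadj
        · intro u v hu hv h
          simp only [mem_insert, not_or] at hu hv
          have huA : u ∈ A := by rcases hcover u with h' | h' | h' | h' <;> tauto
          have hvA : v ∈ A := by rcases hcover v with h' | h' | h' | h' <;> tauto
          exact he2 u huA v hvA h
      · push_neg at htB
        obtain ⟨b_t, hbtB, hntb⟩ := htB
        exact aux_caseAA_mixed G A B s t hst htA' htB' hsB' hcover hB hAB hsB b_t hbtB hntb h2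
    · push_neg at hsB
      obtain ⟨b_s, hbsB, hnsb⟩ := hsB
      by_cases htB : ∀ b ∈ B, G.Adj t b
      · exact aux_caseAA_mixed G A B t s hst.symm hsA' hsB' htB'
          (fun v => by rcases hcover v with h | h | h | h <;> tauto)
          hB hAB htB b_s hbsB hnsb h2
      · push_neg at htB
        obtain ⟨b_t, hbtB, hntb⟩ := htB
        by_cases hdist : ∃ b1 ∈ B, ∃ b2 ∈ B, ¬ G.Adj s b1 ∧ ¬ G.Adj t b2 ∧ b1 ≠ b2
        · obtain ⟨b1, hb1, b2, hb2, hns1, hnt2, hne12⟩ := hdist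
          by_cases h3 : A.card + 2 ≤ B.card
          · -- C = B; s↦b1, t↦b2, A into B \ {b1, b2}
            have hb2' : b2 ∈ B.erase b1 := mem_erase.mpr ⟨hne12.symm, hb2⟩
            have hcB : ((B.erase b1).erase b2).card = B.card - 2 := by
              rw [card_erase_of_mem hb2', card_erase_of_mem hb1]
              omega
            obtain ⟨e, he1, he2⟩ := aux_exists_inj A ((B.erase b1).erase b2) (by omega)
            refine aux_pair2 G B hB s b1 t b2 A e hstne hne12 hsB' htB' hb1 hb2
              hns1 hnt2 hsA' htA'
              (fun v hv => mem_of_mem_erase (mem_of_mem_erase (he1 v hv))) he2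
              (fun v hv => ne_of_mem_erase (mem_of_mem_erase (he1 v hv)))
              (fun v hv => ne_of_mem_erase (he1 v hv))
              (fun v hv hadj =>
                hAB v hv _ (mem_of_mem_erase (mem_of_mem_erase (he1 v hv))) hadj)
              (fun v hv => by rcases hcover v with h | h | h | h <;> tauto)
          · -- |B| = |A| + 1 : C = {s,t} ∪ A; b1 ↦ s, B \ {b1} into A
            have hcB : (B.erase b1).card = B.card - 1 := card_erase_of_mem hb1
            obtain ⟨e, he1, he2⟩ := aux_exists_inj (B.erase b1) A (by omega)
            refine aux_pair1 G (insert s (insert t A)) hCAcl b1 s (B.erase b1) e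
              ?_ (mem_insert_self s _) (fun h => hns1 h.symm) (notMem_erase b1 B)
              (fun v hv => mem_insert_of_mem (mem_insert_of_mem (he1 v hv))) he2
              ?_ ?_ ?_
            · simp only [mem_insert, not_or]
              exact ⟨fun h => hsB' (h ▸ hb1), fun h => htB' (h ▸ hb1),
                fun h => hABd b1 h hb1⟩
            · intro v hv h
              exact hsA' (h ▸ he1 v hv)
            · intro v hv hadj
              have hvB := mem_of_mem_erase hv
              exact hAB _ (he1 v hv) v hvB hadj.symm
            · intro v hv
              simp only [mem_insert, not_or] at hv
              rcases hcover v with h | h | h | h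
              · tauto
              · by_cases hvb : v = b1
                · tauto
                · exact Or.inr (mem_erase.mpr ⟨hvb, h⟩)
              · tauto
              · tauto
        · -- s and t have the same unique non-neighbor b_s = b_t in B
          have hbeq : b_s = b_t := by
            by_contra hne
            exact hdist ⟨b_s, hbsB, b_t, hbtB, hnsb, hntb, hne⟩
          subst hbeq
          have hall : ∀ b' ∈ B, b' ≠ b_s → G.Adj s b' ∧ G.Adj t b' := by
            intro b' hb' hne
            constructor
            · by_contra h
              exact hdist ⟨b', hb', b_s, hbtB, h, hntb, hne⟩
            · by_contra h
              exact hdist ⟨b_s, hbsB, b', hb', hnsb, h, (Ne.symm hne)⟩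
          have hbsA : b_s ∉ A := fun h => hABd b_s h hbsB
          have hcB : (B.erase b_s).card = B.card - 1 := card_erase_of_mem hbsB
          obtain ⟨e, he1, he2⟩ := aux_exists_inj A (B.erase b_s) (by omega)
          have hCcl : G.IsClique ((insert s (insert t (B.erase b_s)) : Finset V) : Set V) := by
            refine aux_clique_insert G s _ (aux_clique_insert G t (B.erase b_s)
              (hB.subset (by intro x hx; exact mem_of_mem_erase hx)) ?_) ?_
            · intro b hb
              exact (hall b (mem_of_mem_erase hb) (ne_of_mem_erase hb)).2
            · intro b hb
              rcases mem_insert.mp hb with rfl | hbB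
              · exact hst
              · exact (hall b (mem_of_mem_erase hbB) (ne_of_mem_erase hbB)).1
          refine aux_pair1 G (insert s (insert t (B.erase b_s))) hCcl b_s s A e
            ?_ (mem_insert_self s _) (fun h => hnsb h.symm) hbsA
            (fun v hv => mem_insert_of_mem (mem_insert_of_mem (he1 v hv))) he2
            (fun v hv h => hsB' (h ▸ mem_of_mem_erase (he1 v hv)))
            (fun v hv hadj => hAB v hv _ (mem_of_mem_erase (he1 v hv)) hadj)
            ?_
          · simp only [mem_insert, not_or]
            exact ⟨fun h => hsB' (h ▸ hbsB), fun h => htB' (h ▸ hbsB), notMem_erase b_s B⟩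
          · intro v hv
            simp only [mem_insert, not_or] at hv
            rcases hcover v with h | h | h | h
            · tauto
            · by_cases hvb : v = b_s
              · tauto
              · exact absurd (mem_erase.mpr ⟨hvb, h⟩) hv.2.2
            · tauto
            · tauto

end Aux3
section Aux4

variable {V : Type*}

/-- Two cut vertices: `s` complete to `A` missing `b_s ∈ B`, `t` complete to `B`
missing `a_t ∈ A`. -/
lemma aux_caseAB [Nonempty V] [DecidableEq V] (G : SimpleGraph V)
    (A B : Finset V) (s t : V) (hst : G.Adj s t)
    (hsA' : s ∉ A) (hsB' : s ∉ B) (htA' : t ∉ A) (htB' : t ∉ B)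
    (hABd : ∀ a ∈ A, a ∉ B)
    (hcover : ∀ v : V, v ∈ A ∨ v ∈ B ∨ v = s ∨ v = t)
    (hA : G.IsClique (A : Set V)) (hB : G.IsClique (B : Set V))
    (hAB : ∀ a ∈ A, ∀ b ∈ B, ¬ G.Adj a b)
    (hsA : ∀ a ∈ A, G.Adj s a) (htB : ∀ b ∈ B, G.Adj t b)
    (b_s : V) (hbsB : b_s ∈ B) (hnsb : ¬ G.Adj s b_s)
    (a_t : V) (hatA : a_t ∈ A) (hnta : ¬ G.Adj t a_t) :
    ∃ C : Finset V, G.IsClique (C : Set V) ∧ G.Colorable C.card := by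
  have hstne : s ≠ t := G.ne_of_adj hst
  by_cases h1 : B.card ≤ A.card
  · -- C = A ∪ {s}; t ↦ a_t, b_s ↦ s, B \ {b_s} into A \ {a_t}
    have hcB : (B.erase b_s).card = B.card - 1 := card_erase_of_mem hbsB
    have hcA : (A.erase a_t).card = A.card - 1 := card_erase_of_mem hatA
    have hBpos : 1 ≤ B.card := card_pos.mpr ⟨b_s, hbsB⟩
    obtain ⟨e, he1, he2⟩ := aux_exists_inj (B.erase b_s) (A.erase a_t) (by omega)
    refine aux_pair2 G (insert s A) (aux_clique_insert G s A hA hsA)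
      t a_t b_s s (B.erase b_s) e
      (fun h => htB' (h ▸ hbsB)) (fun h => hsA' (h.symm ▸ hatA))
      ?_ ?_ (mem_insert_of_mem hatA) (mem_insert_self s A)
      hnta (fun h => hnsb h.symm)
      (fun h => htB' (mem_of_mem_erase h))
      (notMem_erase b_s B)
      (fun v hv => mem_insert_of_mem (mem_of_mem_erase (he1 v hv))) he2
      (fun v hv => ne_of_mem_erase (he1 v hv))
      (fun v hv h => hsA' (h ▸ mem_of_mem_erase (he1 v hv)))
      (fun v hv hadj => hAB _ (mem_of_mem_erase (he1 v hv)) v (mem_of_mem_erase hv) hadj.symm)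
      ?_
    · simp only [mem_insert, not_or]
      exact ⟨hstne.symm, htA'⟩
    · simp only [mem_insert, not_or]
      exact ⟨fun h => hsB' (h ▸ hbsB), fun h => hABd b_s h hbsB⟩
    · intro v hv
      simp only [mem_insert, not_or] at hv
      rcases hcover v with h | h | h | h
      · tauto
      · by_cases hvb : v = b_s
        · tauto
        · exact Or.inr (Or.inr (mem_erase.mpr ⟨hvb, h⟩))
      · tauto
      · tauto
  · -- C = B ∪ {t}; s ↦ b_s, A into B \ {b_s}
    have hcB : (B.erase b_s).card = B.card - 1 := card_erase_of_mem hbsB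
    obtain ⟨e, he1, he2⟩ := aux_exists_inj A (B.erase b_s) (by omega)
    refine aux_pair1 G (insert t B) (aux_clique_insert G t B hB htB) s b_s A e
      ?_ (mem_insert_of_mem hbsB) hnsb hsA'
      (fun v hv => mem_insert_of_mem (mem_of_mem_erase (he1 v hv))) he2
      (fun v hv => ne_of_mem_erase (he1 v hv))
      (fun v hv hadj => hAB v hv _ (mem_of_mem_erase (he1 v hv)) hadj)
      ?_
    · simp only [mem_insert, not_or]
      exact ⟨hstne, hsB'⟩
    · intro v hv
      simp only [mem_insert, not_or] at hv
      rcases hcover v with h | h | h | h <;> tauto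

end Aux4
section Aux5

variable {V : Type*}

/-- Core combinatorial lemma: a graph partitioned into cliques `A`, `B`, `S` with no
edges between `A` and `B`, each `S`-vertex complete to `A` or `B`, and `|S| ≤ 2`,
has a clique `C` such that the graph is `|C|`-colorable. -/
lemma aux_core [Nonempty V] [DecidableEq V] (G : SimpleGraph V)
    (A B S : Finset V)
    (hAS : ∀ a ∈ A, a ∉ S) (hBS : ∀ b ∈ B, b ∉ S) (hABd : ∀ a ∈ A, a ∉ B)
    (hcover : ∀ v : V, v ∈ A ∨ v ∈ B ∨ v ∈ S)
    (hA : G.IsClique (A : Set V)) (hB : G.IsClique (B : Set V))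
    (hS : G.IsClique (S : Set V))
    (hAB : ∀ a ∈ A, ∀ b ∈ B, ¬ G.Adj a b)
    (hSdir : ∀ s ∈ S, (∀ a ∈ A, G.Adj s a) ∨ (∀ b ∈ B, G.Adj s b))
    (hScard : S.card ≤ 2) :
    ∃ C : Finset V, G.IsClique (C : Set V) ∧ G.Colorable C.card := by
  have hBA : ∀ b ∈ B, b ∉ A := fun b hb ha => hABd b ha hb
  have hBAdj : ∀ b ∈ B, ∀ a ∈ A, ¬ G.Adj b a := fun b hb a ha h => hAB a ha b hb h.symm
  rcases (by omega : S.card = 0 ∨ S.card = 1 ∨ S.card = 2) with h0 | h1 | h2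
  · have hS0 := card_eq_zero.mp h0
    subst hS0
    have hcov : ∀ v : V, v ∈ A ∨ v ∈ B := by
      intro v; rcases hcover v with h | h | h
      · tauto
      · tauto
      · simp at h
    by_cases hc : B.card ≤ A.card
    · exact aux_case0 G A B hcov hA hAB hc
    · exact aux_case0 G B A (fun v => (hcov v).symm) hB hBAdj (by omega)
  · obtain ⟨s, rfl⟩ := card_eq_one.mp h1
    have hsA' : s ∉ A := fun h => hAS s h (mem_singleton_self s)
    have hsB' : s ∉ B := fun h => hBS s h (mem_singleton_self s)
    have hcov : ∀ v : V, v ∈ A ∨ v ∈ B ∨ v = s := by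
      intro v; rcases hcover v with h | h | h
      · tauto
      · tauto
      · simp only [mem_singleton] at h; tauto
    rcases hSdir s (mem_singleton_self s) with hc | hc
    · exact aux_case1 G A B s hsA' hsB' hcov hA hB hAB hc
    · exact aux_case1 G B A s hsB' hsA'
        (fun v => by rcases hcov v with h | h | h <;> tauto) hB hA hBAdj hc
  · obtain ⟨s, t, hstne, rfl⟩ := card_eq_two.mp h2
    have hsS : s ∈ ({s, t} : Finset V) := by simp
    have htS : t ∈ ({s, t} : Finset V) := by simp
    have hst : G.Adj s t := hS (by simp) (by simp) hstne
    have hsA' : s ∉ A := fun h => hAS s h hsS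
    have hsB' : s ∉ B := fun h => hBS s h hsS
    have htA' : t ∉ A := fun h => hAS t h htS
    have htB' : t ∉ B := fun h => hBS t h htS
    have hcov : ∀ v : V, v ∈ A ∨ v ∈ B ∨ v = s ∨ v = t := by
      intro v; rcases hcover v with h | h | h
      · tauto
      · tauto
      · simp only [mem_insert, mem_singleton] at h; tauto
    have hcovBA : ∀ v : V, v ∈ B ∨ v ∈ A ∨ v = s ∨ v = t := fun v => by
      rcases hcov v with h | h | h | h <;> tauto
    rcases hSdir s hsS with hsc | hsc <;> rcases hSdir t htS with htc | htc
    · exact aux_caseAA G A B s t hst hsA' hsB' htA' htB' hABd hcov hA hB hAB hsc htc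
    · by_cases hsB : ∀ b ∈ B, G.Adj s b
      · exact aux_caseAA G B A s t hst hsB' hsA' htB' htA' hBA hcovBA hB hA hBAdj hsB htc
      · by_cases htA : ∀ a ∈ A, G.Adj t a
        · exact aux_caseAA G A B s t hst hsA' hsB' htA' htB' hABd hcov hA hB hAB hsc htA
        · push_neg at hsB htA
          obtain ⟨b_s, hbsB, hnsb⟩ := hsB
          obtain ⟨a_t, hatA, hnta⟩ := htA
          exact aux_caseAB G A B s t hst hsA' hsB' htA' htB' hABd hcov hA hB hAB hsc htc
            b_s hbsB hnsb a_t hatA hnta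
    · by_cases htB : ∀ b ∈ B, G.Adj t b
      · exact aux_caseAA G B A s t hst hsB' hsA' htB' htA' hBA hcovBA hB hA hBAdj hsc htB
      · by_cases hsA : ∀ a ∈ A, G.Adj s a
        · exact aux_caseAA G A B s t hst hsA' hsB' htA' htB' hABd hcov hA hB hAB hsA htc
        · push_neg at htB hsA
          obtain ⟨b_t, hbtB, hntb⟩ := htB
          obtain ⟨a_s, hasA, hnsa⟩ := hsA
          exact aux_caseAB G A B t s hst.symm htA' htB' hsA' hsB' hABd
            (fun v => by rcases hcov v with h | h | h | h <;> tauto) hA hB hAB htc hsc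
            b_t hbtB hntb a_s hasA hnsa
    · exact aux_caseAA G B A s t hst hsB' hsA' htB' htA' hBA hcovBA hB hA hBAdj hsc htc

end Aux5
/-- The independence number of `G` is `m`: `m` is the greatest size of a set of
pairwise non-adjacent vertices. -/
def IndepNumIs {V : Type*} (G : SimpleGraph V) (m : ℕ) : Prop :=
  IsGreatest {n | ∃ s : Finset V, ((s : Set V).Pairwise fun a b => ¬ G.Adj a b) ∧ s.card = n} m

/-- The clique number of `G` is `m`: `m` is the greatest size of a clique. -/
def CliqueNumIs {V : Type*} (G : SimpleGraph V) (m : ℕ) : Prop :=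
  IsGreatest {n | ∃ s : Finset V, G.IsClique (s : Set V) ∧ s.card = n} m

/-- If `G` is a connected `k`-chromatic graph with independence number `2` that has a
clique cut-set `S` of size at most two, then the clique number of `G` equals `k`. -/
theorem stmt_12 {V : Type*} [Fintype V] (G : SimpleGraph V) (k : ℕ) (S : Finset V)
    (hconn : G.Connected) (hchrom : G.chromaticNumber = (k : ℕ∞))
    (hindep : IndepNumIs G 2)
    (hcard : S.card ≤ 2) (hclique : G.IsClique (S : Set V))
    (hcut : ¬ (G.induce {v | v ∉ S}).Connected) :
    CliqueNumIs G k := by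
  classical
  -- a non-adjacent pair of vertices
  obtain ⟨p, hp, hp2⟩ := hindep.1
  obtain ⟨x, y, hxy, rfl⟩ := card_eq_two.mp hp2
  have hnxy : ¬ G.Adj x y := hp (by simp) (by simp) hxy
  haveI hne : Nonempty V := ⟨x⟩
  -- no independent triple
  have hno3 : ∀ a b c : V, a ≠ b → a ≠ c → b ≠ c →
      ¬ G.Adj a b → ¬ G.Adj a c → ¬ G.Adj b c → False := by
    intro a b c hab hac hbc nab nac nbc
    have h3 : ({a, b, c} : Finset V).card = 3 := by
      rw [card_insert_of_notMem (by simp [hab, hac]),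
          card_insert_of_notMem (by simp [hbc]), card_singleton]
    have hmem : (3 : ℕ) ∈ {n | ∃ s : Finset V,
        ((s : Set V).Pairwise fun a b => ¬ G.Adj a b) ∧ s.card = n} := by
      refine ⟨{a, b, c}, ?_, h3⟩
      intro u hu v hv huv
      simp only [coe_insert, Set.mem_insert_iff, coe_singleton,
        Set.mem_singleton_iff] at hu hv
      rcases hu with rfl | rfl | rfl <;> rcases hv with rfl | rfl | rfl <;>
        first
          | exact absurd rfl huv
          | assumption
          | exact fun h => nab h.symm
          | exact fun h => nac h.symm
          | exact fun h => nbc h.symm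
    have := hindep.2 hmem
    omega
  -- the complement of the cut-set is nonempty
  by_cases hTall : ∀ v : V, v ∈ S
  · exact absurd (hclique (hTall x) (hTall y) hxy) hnxy
  push_neg at hTall
  obtain ⟨v0, hv0⟩ := hTall
  set T : Set V := {v | v ∉ S} with hTdef
  haveI : Nonempty T := ⟨⟨v0, hv0⟩⟩
  set G' := G.induce T with hG'def
  have hnp : ¬ G'.Preconnected := fun h => hcut ⟨h⟩
  have hex : ∃ u w : T, ¬ G'.Reachable u w := by
    by_contra hc
    push_neg at hc
    exact hnp fun u w => hc u w
  obtain ⟨u, w, huw⟩ := hex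
  set A : Finset V := Finset.univ.filter (fun v => ∃ h : v ∈ T, G'.Reachable u ⟨v, h⟩)
    with hAdef
  set B : Finset V := Finset.univ.filter (fun v => ∃ h : v ∈ T, ¬ G'.Reachable u ⟨v, h⟩)
    with hBdef
  have hmemA : ∀ v : V, v ∈ A ↔ ∃ h : v ∈ T, G'.Reachable u ⟨v, h⟩ := by
    intro v; simp [hAdef]
  have hmemB : ∀ v : V, v ∈ B ↔ ∃ h : v ∈ T, ¬ G'.Reachable u ⟨v, h⟩ := by
    intro v; simp [hBdef]
  have hAS : ∀ a ∈ A, a ∉ S := by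
    intro a ha; obtain ⟨h, _⟩ := (hmemA a).mp ha; exact h
  have hBS : ∀ b ∈ B, b ∉ S := by
    intro b hb; obtain ⟨h, _⟩ := (hmemB b).mp hb; exact h
  have hABd : ∀ a ∈ A, a ∉ B := by
    intro a ha hb
    obtain ⟨h1, hr⟩ := (hmemA a).mp ha
    obtain ⟨h2, hnr⟩ := (hmemB a).mp hb
    exact hnr hr
  have hcover : ∀ v : V, v ∈ A ∨ v ∈ B ∨ v ∈ S := by
    intro v
    by_cases hvS : v ∈ S
    · tauto
    · have hvT : v ∈ T := hvS
      by_cases hr : G'.Reachable u ⟨v, hvT⟩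
      · exact Or.inl ((hmemA v).mpr ⟨hvT, hr⟩)
      · exact Or.inr (Or.inl ((hmemB v).mpr ⟨hvT, hr⟩))
  have hAB : ∀ a ∈ A, ∀ b ∈ B, ¬ G.Adj a b := by
    intro a ha b hb hadj
    obtain ⟨h1, hr⟩ := (hmemA a).mp ha
    obtain ⟨h2, hnr⟩ := (hmemB b).mp hb
    have hadj' : G'.Adj ⟨a, h1⟩ ⟨b, h2⟩ := hadj
    exact hnr (hr.trans hadj'.reachable)
  have huA : (u : V) ∈ A := (hmemA u).mpr ⟨u.2, by exact SimpleGraph.Reachable.refl u⟩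
  have hwB : (w : V) ∈ B := (hmemB w).mpr ⟨w.2, by exact huw⟩
  have hAcl : G.IsClique (A : Set V) := by
    rw [SimpleGraph.isClique_iff]
    intro a ha b hb hab
    by_contra hnadj
    have hwa : (w : V) ≠ a := fun h => hABd a ha (h ▸ hwB)
    have hwb : (w : V) ≠ b := fun h => hABd b hb (h ▸ hwB)
    exact hno3 a b w hab hwa.symm hwb.symm hnadj
      (fun h => hAB a ha w hwB h) (fun h => hAB b hb w hwB h)
  have hBcl : G.IsClique (B : Set V) := by
    rw [SimpleGraph.isClique_iff]
    intro a ha b hb hab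
    by_contra hnadj
    have hua : (u : V) ≠ a := fun h => hABd u huA ((h ▸ ha : ((u : V) ∈ B)))
    have hub : (u : V) ≠ b := fun h => hABd u huA ((h ▸ hb : ((u : V) ∈ B)))
    exact hno3 a b u hab hua.symm hub.symm hnadj
      (fun h => hAB u huA a ha h.symm) (fun h => hAB u huA b hb h.symm)
  have hSdir : ∀ s ∈ S, (∀ a ∈ A, G.Adj s a) ∨ (∀ b ∈ B, G.Adj s b) := by
    intro s hsS
    by_contra hc
    push_neg at hc
    obtain ⟨⟨a, haA, hna⟩, ⟨b, hbB, hnb⟩⟩ := hc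
    have hsa : s ≠ a := fun h => hAS a haA (h ▸ hsS)
    have hsb : s ≠ b := fun h => hBS b hbB (h ▸ hsS)
    have hab : a ≠ b := fun h => hABd a haA (h ▸ hbB)
    exact hno3 s a b hsa hsb hab hna hnb (hAB a haA b hbB)
  obtain ⟨C, hCcl, hCcol⟩ := aux_core G A B S hAS hBS hABd hcover hAcl hBcl hclique
    hAB hSdir hcard
  -- upper bound: every clique has size at most `k`
  have hcolk : G.Colorable k := by
    rw [← SimpleGraph.chromaticNumber_le_iff_colorable, hchrom]
  have hfree : G.CliqueFree (k + 1) := hcolk.cliqueFree (by omega)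
  have hupper : ∀ n ∈ {n | ∃ s : Finset V, G.IsClique (s : Set V) ∧ s.card = n},
      n ≤ k := by
    rintro n ⟨s, hs, rfl⟩
    by_contra hlt
    push_neg at hlt
    obtain ⟨t', ht's, ht'c⟩ := exists_subset_card_eq (show k + 1 ≤ s.card by omega)
    exact hfree t' ⟨hs.subset (coe_subset.mpr ht's), ht'c⟩
  have hkC : k ≤ C.card := by
    have h := hCcol.chromaticNumber_le
    rw [hchrom] at h
    exact_mod_cast h
  have hCk : C.card = k := le_antisymm (hupper _ ⟨C, hCcl, rfl⟩) hkC
  exact ⟨⟨C, hCcl, hCk⟩, hupper⟩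
end

section
/- Let G be a connected graph with α(G) = 2 and χ(G) = k, and let S be a stable cut-set of size 2 with components G₁, G₂ of G − S. Then every vertex u ∈ S satisfies V(G₁) ⊆ N(u) or V(G₂) ⊆ N(u), and max{χ(G₁), χ(G₂)} ≥ k − 1. -/
/-- Let `G` be a connected graph with `α(G) = 2` and `χ(G) = k`, let `S` be a stable
cut-set of size `2`, and let `C₁`, `C₂` be the (exactly two) connected components of
`G − S`. Then every vertex `w ∈ S` satisfies `V(C₁) ⊆ N(w)` or `V(C₂) ⊆ N(w)`, and
`max{χ(C₁), χ(C₂)} ≥ k − 1`. -/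
theorem stmt_14 {V : Type*} [Fintype V] (G : SimpleGraph V) (k : ℕ) (S : Finset V)
    (C₁ C₂ : (G.induce {v | v ∉ S}).ConnectedComponent)
    (hconn : G.Connected) (hchrom : G.chromaticNumber = (k : ℕ∞))
    (hindep : IndepNumIs G 2)
    (hcard : S.card = 2)
    (hstable : (S : Set V).Pairwise fun a b => ¬ G.Adj a b)
    (hcut : ¬ (G.induce {v | v ∉ S}).Connected)
    (hne : C₁ ≠ C₂)
    (hall : ∀ C : (G.induce {v | v ∉ S}).ConnectedComponent, C = C₁ ∨ C = C₂) :
    (∀ w ∈ S,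
      (∀ a : {v : V | v ∉ S}, a ∈ C₁.supp → G.Adj w a) ∨
      (∀ a : {v : V | v ∉ S}, a ∈ C₂.supp → G.Adj w a)) ∧
    ((k - 1 : ℕ) : ℕ∞) ≤
      max ((G.induce {v | v ∉ S}).induce C₁.supp).chromaticNumber
          ((G.induce {v | v ∉ S}).induce C₂.supp).chromaticNumber := by
  classical
  -- adjacent vertices outside S lie in the same component
  have hsame : ∀ a b : {v : V | v ∉ S}, G.Adj a b →
      (G.induce {v | v ∉ S}).connectedComponentMk a = (G.induce {v | v ∉ S}).connectedComponentMk b := by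
    intro a b hab
    exact SimpleGraph.ConnectedComponent.sound (SimpleGraph.Adj.reachable hab)
  constructor
  · -- part 1
    intro w hw
    by_contra hcon
    push_neg at hcon
    obtain ⟨⟨a, ha1, ha2⟩, ⟨b, hb1, hb2⟩⟩ := hcon
    rw [SimpleGraph.ConnectedComponent.mem_supp_iff] at ha1 hb1
    have hab : ¬ G.Adj a b := by
      intro h
      exact hne (ha1 ▸ hb1 ▸ hsame a b h)
    have hwa : (w : V) ≠ (a : V) := fun h => a.2 (h ▸ hw)
    have hwb : (w : V) ≠ (b : V) := fun h => b.2 (h ▸ hw)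
    have hab' : (a : V) ≠ (b : V) := by
      intro h
      apply hne
      rw [← ha1, ← hb1]
      congr 1
      exact Subtype.ext h
    have h3 : (3 : ℕ) ∈ {n | ∃ s : Finset V,
        ((s : Set V).Pairwise fun a b => ¬ G.Adj a b) ∧ s.card = n} := by
      refine ⟨{w, (a : V), (b : V)}, ?_, ?_⟩
      · intro x hx y hy hxy
        simp only [Finset.coe_insert, Set.mem_insert_iff, Finset.coe_singleton,
          Set.mem_singleton_iff] at hx hy
        rcases hx with rfl | rfl | rfl <;> rcases hy with rfl | rfl | rfl <;>
          first
          | exact absurd rfl hxy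
          | exact ha2
          | exact hb2
          | exact fun h => ha2 h.symm
          | exact fun h => hb2 h.symm
          | exact hab
          | exact fun h => hab h.symm
      · rw [Finset.card_insert_of_notMem, Finset.card_insert_of_notMem,
          Finset.card_singleton]
        · simpa using hab'
        · simp [hwa, hwb]
    have := hindep.2 h3
    omega
  · -- part 2
    have hfin : Finite {v : V | v ∉ S} := Subtype.finite
    have hfin1 : Finite ↥C₁.supp := Subtype.finite
    have hfin2 : Finite ↥C₂.supp := Subtype.finite
    set n₁ := ((G.induce {v | v ∉ S}).induce C₁.supp).chromaticNumber.toNat with hn₁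
    set n₂ := ((G.induce {v | v ∉ S}).induce C₂.supp).chromaticNumber.toNat with hn₂
    have hc₁ : ((G.induce {v | v ∉ S}).induce C₁.supp).Colorable n₁ :=
      SimpleGraph.colorable_chromaticNumber_of_fintype _
    have hc₂ : ((G.induce {v | v ∉ S}).induce C₂.supp).Colorable n₂ :=
      SimpleGraph.colorable_chromaticNumber_of_fintype _
    have htop₁ : ((G.induce {v | v ∉ S}).induce C₁.supp).chromaticNumber ≠ ⊤ :=
      SimpleGraph.chromaticNumber_ne_top_iff_exists.2 ⟨n₁, hc₁⟩
    have htop₂ : ((G.induce {v | v ∉ S}).induce C₂.supp).chromaticNumber ≠ ⊤ :=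
      SimpleGraph.chromaticNumber_ne_top_iff_exists.2 ⟨n₂, hc₂⟩
    set m := max n₁ n₂ with hm
    obtain ⟨col₁⟩ := hc₁.mono (le_max_left n₁ n₂)
    obtain ⟨col₂⟩ := hc₂.mono (le_max_right n₁ n₂)
    -- build a coloring of G with m+1 colors
    have hGcol : G.Colorable (m + 1) := by
      refine ⟨SimpleGraph.Coloring.mk (fun v =>
        if hv : v ∈ S then Fin.last m
        else if h1 : (G.induce {v | v ∉ S}).connectedComponentMk ⟨v, hv⟩ = C₁ then
          (col₁ ⟨⟨v, hv⟩, (C₁.mem_supp_iff _).2 h1⟩).castSucc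
        else
          (col₂ ⟨⟨v, hv⟩, (C₂.mem_supp_iff _).2 ((hall _).resolve_left h1)⟩).castSucc) ?_⟩
      intro x y hxy
      by_cases hx : x ∈ S <;> by_cases hy : y ∈ S
      · exact absurd hxy (hstable hx hy (G.ne_of_adj hxy))
      · simp only [dif_pos hx, dif_neg hy]
        split_ifs <;> exact fun h => (Fin.castSucc_lt_last _).ne' h
      · simp only [dif_neg hx, dif_pos hy]
        split_ifs <;> exact fun h => (Fin.castSucc_lt_last _).ne h
      · simp only [dif_neg hx, dif_neg hy]
        have hcc : (G.induce {v | v ∉ S}).connectedComponentMk ⟨x, hx⟩ = (G.induce {v | v ∉ S}).connectedComponentMk ⟨y, hy⟩ :=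
          hsame _ _ hxy
        by_cases h1 : (G.induce {v | v ∉ S}).connectedComponentMk ⟨x, hx⟩ = C₁
        · rw [dif_pos h1, dif_pos (hcc ▸ h1)]
          intro h
          exact col₁.valid (v := ⟨⟨x, hx⟩, (C₁.mem_supp_iff _).2 h1⟩)
            (w := ⟨⟨y, hy⟩, (C₁.mem_supp_iff _).2 (hcc ▸ h1)⟩) hxy
            (Fin.castSucc_injective _ h)
        · rw [dif_neg h1, dif_neg (hcc ▸ h1)]
          intro h
          exact col₂.valid (v := ⟨⟨x, hx⟩, (C₂.mem_supp_iff _).2 ((hall _).resolve_left h1)⟩)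
            (w := ⟨⟨y, hy⟩, (C₂.mem_supp_iff _).2 ((hall _).resolve_left (hcc ▸ h1))⟩) hxy
            (Fin.castSucc_injective _ h)
    have hle : G.chromaticNumber ≤ (m + 1 : ℕ) := hGcol.chromaticNumber_le
    rw [hchrom, Nat.cast_le] at hle
    have hkm : ((k - 1 : ℕ) : ℕ∞) ≤ (m : ℕ∞) := by
      rw [Nat.cast_le]; omega
    refine hkm.trans ?_
    rcases le_total n₁ n₂ with h | h
    · rw [hm, max_eq_right h]
      exact (ENat.coe_toNat htop₂).le.trans (le_max_right _ _)
    · rw [hm, max_eq_left h]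
      exact (ENat.coe_toNat htop₁).le.trans (le_max_left _ _)
end

section
/- For all integers k ≥ 5 and real x ≥ k: (x−1)_{k−1}·(x−2)_{k−3}·((x−1)^3 + 2(x−1)^2 − 1) < (x−1)_{k−1}·((x−1)^k − 1), hence is strictly less than (x−1)_{k−1}·((x−1)^k + (−1)^{k−1}). -/
private lemma desc_pos_le (n : ℕ) (t : ℝ) (h : (n : ℝ) ≤ t) :
    0 < (descPochhammer ℝ n).eval t ∧ (descPochhammer ℝ n).eval t ≤ t ^ n := by
  induction n with
  | zero => simp
  | succ n ih =>
    have hn : (n : ℝ) ≤ t := by push_cast at h ⊢; linarith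
    obtain ⟨hpos, hle⟩ := ih hn
    have h1 : (1 : ℝ) ≤ t - n := by push_cast at h; linarith
    rw [descPochhammer_succ_eval]
    refine ⟨mul_pos hpos (by linarith), ?_⟩
    rw [pow_succ]
    have ht0 : (0 : ℝ) ≤ t := le_trans (by positivity) h
    exact mul_le_mul hle (by linarith) (by linarith) (by positivity)

set_option maxHeartbeats 1000000 in
/-- For integers `k ≥ 5` and real `x ≥ k`:
`(x−1)_{k−1}·(x−2)_{k−3}·((x−1)³ + 2(x−1)² − 1) < (x−1)_{k−1}·((x−1)^k − 1)`,
hence it is strictly less than `(x−1)_{k−1}·((x−1)^k + (−1)^{k−1})`. -/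
theorem stmt_17 (k : ℕ) (hk : 5 ≤ k) (x : ℝ) (hx : (k : ℝ) ≤ x) :
    (descPochhammer ℝ (k - 1)).eval (x - 1) * (descPochhammer ℝ (k - 3)).eval (x - 2) *
        ((x - 1) ^ 3 + 2 * (x - 1) ^ 2 - 1) <
      (descPochhammer ℝ (k - 1)).eval (x - 1) * ((x - 1) ^ k - 1) ∧
    (descPochhammer ℝ (k - 1)).eval (x - 1) * (descPochhammer ℝ (k - 3)).eval (x - 2) *
        ((x - 1) ^ 3 + 2 * (x - 1) ^ 2 - 1) <
      (descPochhammer ℝ (k - 1)).eval (x - 1) * ((x - 1) ^ k + (-1 : ℝ) ^ (k - 1)) := by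
  obtain ⟨m, rfl⟩ : ∃ m, k = m + 5 := ⟨k - 5, by omega⟩
  have h1 : m + 5 - 1 = m + 4 := by omega
  have h3 : m + 5 - 3 = m + 2 := by omega
  rw [h1, h3]
  have hm0 : (0 : ℝ) ≤ (m : ℝ) := Nat.cast_nonneg m
  have hxm : (m : ℝ) + 5 ≤ x := by push_cast at hx; linarith
  set t : ℝ := x - 1 with hts
  have ht : (m : ℝ) + 4 ≤ t := by simp only [hts]; linarith
  have ht4 : (4 : ℝ) ≤ t := by linarith
  -- P bounds
  obtain ⟨hPpos, -⟩ := desc_pos_le (m + 4) t (by push_cast; linarith)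
  set P : ℝ := (descPochhammer ℝ (m + 4)).eval t with hPs
  -- Q bounds
  set s : ℝ := x - 2 with hss
  have hst : s = t - 1 := by simp [hss, hts]; ring
  obtain ⟨hDpos, hDle⟩ := desc_pos_le m s (by rw [hst]; linarith)
  have hQ : (descPochhammer ℝ (m + 2)).eval s =
      (descPochhammer ℝ m).eval s * (s - m) * (s - (m + 1)) := by
    rw [descPochhammer_succ_eval, descPochhammer_succ_eval]
    push_cast; ring
  have hs0 : (0 : ℝ) ≤ s := by rw [hst]; linarith
  have hsm : (m : ℝ) ≤ s := by rw [hst]; linarith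
  have hb : (0 : ℝ) ≤ s - (m + 1) := by rw [hst]; linarith
  have hQle : (descPochhammer ℝ (m + 2)).eval s ≤ t ^ m * (t - 1) * (t - 2) := by
    rw [hQ]
    have hsmt : s ^ m ≤ t ^ m := pow_le_pow_left₀ hs0 (by rw [hst]; linarith) m
    have step1 : (descPochhammer ℝ m).eval s * (s - m) ≤ t ^ m * s :=
      mul_le_mul (hDle.trans hsmt) (by linarith) (by linarith) (by positivity)
    have step2 : (descPochhammer ℝ m).eval s * (s - m) * (s - (m + 1)) ≤
        t ^ m * s * (s - 1) :=
      mul_le_mul step1 (by linarith) hb (by positivity)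
    calc (descPochhammer ℝ m).eval s * (s - m) * (s - (m + 1)) ≤ t ^ m * s * (s - 1) := step2
      _ = t ^ m * (t - 1) * (t - 2) := by rw [hst]; ring
  have hQpos : 0 < (descPochhammer ℝ (m + 2)).eval s := by
    rw [hQ]
    have : (0:ℝ) < s - (m+1) := by rw [hst]; linarith
    have : (0:ℝ) < s - m := by linarith
    positivity
  have hc : (0 : ℝ) < t ^ 3 + 2 * t ^ 2 - 1 := by nlinarith
  -- key polynomial inequality
  have hu : (1 : ℝ) ≤ t ^ m := one_le_pow₀ (by linarith)
  have hg : (1 : ℝ) ≤ t ^ 4 + 4 * t ^ 3 - 3 * t ^ 2 - 3 * t + 2 := by nlinarith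
  have hkey : t ^ m * (t - 1) * (t - 2) * (t ^ 3 + 2 * t ^ 2 - 1) < t ^ (m + 5) - 1 := by
    have hmul : (1 : ℝ) * (t ^ 4 + 4 * t ^ 3 - 3 * t ^ 2 - 3 * t + 2) ≤
        t ^ m * (t ^ 4 + 4 * t ^ 3 - 3 * t ^ 2 - 3 * t + 2) :=
      mul_le_mul_of_nonneg_right hu (by linarith)
    have hpa : t ^ (m + 5) = t ^ m * t ^ 5 := by rw [pow_add]
    nlinarith [hmul, hg]
  have main : P * (descPochhammer ℝ (m + 2)).eval s * (t ^ 3 + 2 * t ^ 2 - 1) <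
      P * (t ^ (m + 5) - 1) := by
    have step : P * (descPochhammer ℝ (m + 2)).eval s * (t ^ 3 + 2 * t ^ 2 - 1) ≤
        P * (t ^ m * (t - 1) * (t - 2)) * (t ^ 3 + 2 * t ^ 2 - 1) := by
      apply mul_le_mul_of_nonneg_right _ (le_of_lt hc)
      exact mul_le_mul_of_nonneg_left hQle (le_of_lt hPpos)
    calc P * (descPochhammer ℝ (m + 2)).eval s * (t ^ 3 + 2 * t ^ 2 - 1)
        ≤ P * (t ^ m * (t - 1) * (t - 2)) * (t ^ 3 + 2 * t ^ 2 - 1) := step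
      _ = P * (t ^ m * (t - 1) * (t - 2) * (t ^ 3 + 2 * t ^ 2 - 1)) := by ring
      _ < P * (t ^ (m + 5) - 1) := by exact mul_lt_mul_of_pos_left hkey hPpos
  refine ⟨main, lt_of_lt_of_le main ?_⟩
  have : (-1 : ℝ) ^ (m + 4) = 1 ∨ (-1 : ℝ) ^ (m + 4) = -1 := neg_one_pow_eq_or ℝ (m + 4)
  rcases this with h | h <;> rw [h] <;> nlinarith [hPpos]
end
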